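/- arXiv:1801.03602 — 4 statements merged into one kernel-verified Lean document; each statement's English description precedes it below -/
import Mathlib

section
/- Let n be a positive integer and k > 1 a positive integer, p a prime, q = p^r with r ≥ 1, and D = p^{⌊log_p(k)⌋+1}. Then S_{F_q}(e_{n,k}) = Σ_{j_1=0}^{D−1} Σ_{j_2=0}^{j_1} ... Σ_{j_{q−1}=0}^{j_{q−2}} c_{j_1,...,j_{q−1}}(k) · (1 + ξ_D^{−j_1} + ... + ξ_D^{−j_{q−1}})^n, where c_{j_1,...,j_{q−1}}(k) = (1/D^{q−1}) Σ_{b_{q−1}=0}^{D−1} ... Σ_{b_1=0}^{D−1} ξ_p^{Tr(F^{(p)}_{k;F_q}(b_1,...,b_{q−1}))} Σ_{(j_1',...,j_{q−1}') ∈ Sym(j_1,...,j_{q−1})} ξ_D^{j_1' b_{q−1} + ... + j_{q−1}' b_1}, with ξ_m = exp(2πi/m), Tr = Tr_{F_q/F_p}, F_q = {0, α_1, ..., α_{q−1}}, and F^{(p)}_{k;F_q}(m_1,...,m_{q−1}) = Λ^{(p)}_{α_1,...,α_{q−1}}(k, m_1, ..., m_{q−1}). -/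
noncomputable section

/-- Evaluation of the elementary symmetric polynomial in `n` variables of degree `k`. -/
def esymmVal {R : Type*} [CommRing R] (n k : ℕ) (x : Fin n → R) : R :=
  ∑ s ∈ Finset.powersetCard k Finset.univ, ∏ i ∈ s, x i

/-- `Lam l a m k` is the quantity `Λ_{a_1,…,a_l}(k, m_1,…,m_l)`. -/
def Lam {R : Type*} [CommRing R] : (l : ℕ) → (Fin l → R) → (Fin l → ℕ) → ℤ → R
  | 0, _, _, k => if k = 0 then 1 else 0
  | l + 1, a, m, k =>
      ∑ j ∈ Finset.range (m (Fin.last l) + 1),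
        (Nat.choose (m (Fin.last l)) j : R) * a (Fin.last l) ^ j *
          Lam l (fun i => a i.castSucc) (fun i => m i.castSucc) (k - j)

/-- `m⁺ = m` if `m > 0` and `m⁺ = m + (⌊-m/D⌋ + 1)·D` if `m ≤ 0`. -/
def mplus (D : ℕ) (m : ℤ) : ℤ := if 0 < m then m else m + ((-m) / (D : ℤ) + 1) * D

namespace StmtAux
open Polynomial Finset

/-! ### `Lam` as a polynomial coefficient -/

variable {R : Type*} [CommRing R]

def lamPoly (l : ℕ) (a : Fin l → R) (m : Fin l → ℕ) : R[X] :=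
  ∏ i, (1 + C (a i) * X) ^ (m i)

lemma lam_neg : ∀ (l : ℕ) (a : Fin l → R) (m : Fin l → ℕ) (k : ℤ), k < 0 → Lam l a m k = 0
  | 0, _, _, k, hk => by
      rw [Lam]; simp [show k ≠ 0 by omega]
  | l + 1, a, m, k, hk => by
      rw [Lam]
      refine Finset.sum_eq_zero fun j hj => ?_
      rw [lam_neg l _ _ _ (by omega), mul_zero]

lemma coeff_one_add_CX_pow (a : R) (m t : ℕ) :
    ((1 + C a * X) ^ m).coeff t = (m.choose t : R) * a ^ t := by
  rw [add_comm, add_pow, finset_sum_coeff]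
  have ht : ∀ j : ℕ, ((C a * X) ^ j * 1 ^ (m - j) * ((m.choose j : ℕ) : R[X])).coeff t
      = if j = t then (m.choose j : R) * a ^ t else 0 := by
    intro j
    rw [one_pow, mul_one, mul_pow, ← C_pow, ← C_eq_natCast, coeff_mul_C, mul_comm (C (a ^ j)),
      coeff_mul_C, coeff_X_pow]
    by_cases h : t = j
    · subst h; simp [mul_comm]
    · simp [h, Ne.symm h]
  rw [Finset.sum_congr rfl fun j _ => ht j, Finset.sum_ite_eq' (Finset.range (m + 1))]
  by_cases h : t ∈ Finset.range (m + 1)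
  · simp [h]
  · simp only [Finset.mem_range, not_lt] at h
    rw [Nat.choose_eq_zero_of_lt (show m < t by omega)]
    simp [show ¬ t < m + 1 by omega]

lemma coeff_lamPoly_zero (l : ℕ) (a : Fin l → R) (m : Fin l → ℕ) :
    (lamPoly l a m).coeff 0 = 1 := by
  have : (lamPoly l a m).coeff 0 = constantCoeff (lamPoly l a m) := rfl
  rw [this, lamPoly, map_prod]
  refine Finset.prod_eq_one fun i _ => ?_
  rw [map_pow]
  simp

lemma lam_eq_coeff : ∀ (l : ℕ) (a : Fin l → R) (m : Fin l → ℕ) (k : ℕ),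
    Lam l a m (k : ℤ) = (lamPoly l a m).coeff k
  | 0, a, m, k => by
      rw [Lam, lamPoly]
      simp [coeff_one, eq_comm]
  | l + 1, a, m, k => by
      rw [Lam]
      have hsplit : lamPoly (l + 1) a m
          = lamPoly l (fun i => a i.castSucc) (fun i => m i.castSucc)
            * (1 + C (a (Fin.last l)) * X) ^ (m (Fin.last l)) := by
        rw [lamPoly, Fin.prod_univ_castSucc]; rfl
      rw [hsplit, mul_comm, coeff_mul, Finset.Nat.sum_antidiagonal_eq_sum_range_succ_mk]
      set M := max (m (Fin.last l) + 1) (k + 1) with hM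
      have h1 : ∑ j ∈ Finset.range (m (Fin.last l) + 1),
            (Nat.choose (m (Fin.last l)) j : R) * a (Fin.last l) ^ j *
              Lam l (fun i => a i.castSucc) (fun i => m i.castSucc) ((k : ℤ) - j)
          = ∑ j ∈ Finset.range M, (Nat.choose (m (Fin.last l)) j : R) * a (Fin.last l) ^ j *
              Lam l (fun i => a i.castSucc) (fun i => m i.castSucc) ((k : ℤ) - j) := by
        refine Finset.sum_subset (Finset.range_subset_range.2 (le_max_left _ _)) ?_
        intro j _ hj
        simp only [Finset.mem_range, not_lt] at hj
        rw [Nat.choose_eq_zero_of_lt (by omega)]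
        simp
      have h1' : ∑ j ∈ Finset.range M, (Nat.choose (m (Fin.last l)) j : R) * a (Fin.last l) ^ j *
              Lam l (fun i => a i.castSucc) (fun i => m i.castSucc) ((k : ℤ) - j)
          = ∑ j ∈ Finset.range (k + 1),
              (Nat.choose (m (Fin.last l)) j : R) * a (Fin.last l) ^ j *
              Lam l (fun i => a i.castSucc) (fun i => m i.castSucc) ((k : ℤ) - j) := by
        refine (Finset.sum_subset (Finset.range_subset_range.2 (le_max_right _ _)) ?_).symm
        intro j _ hj
        simp only [Finset.mem_range, not_lt] at hj
        rw [lam_neg _ _ _ _ (by omega), mul_zero]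
      rw [h1, h1']
      refine Finset.sum_congr rfl fun j hj => ?_
      simp only [Finset.mem_range] at hj
      rw [coeff_one_add_CX_pow, show ((k:ℤ) - j) = ((k - j : ℕ) : ℤ) by omega,
        lam_eq_coeff, mul_assoc]

/-! ### elementary symmetric value as a coefficient -/

lemma esymm_eq_coeff (n k : ℕ) (x : Fin n → R) :
    esymmVal n k x = (∏ t : Fin n, (1 + C (x t) * X)).coeff k := by
  have h : ∀ t : Fin n, (1 + C (x t) * X) = (C (x t) * X + 1) := fun t => add_comm _ _
  simp only [h]
  rw [Finset.prod_add]
  simp only [Finset.prod_const_one, mul_one, finset_sum_coeff]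
  have hterm : ∀ s : Finset (Fin n), (∏ i ∈ s, (C (x i) * X)).coeff k
      = if s.card = k then ∏ i ∈ s, x i else 0 := by
    intro s
    rw [Finset.prod_mul_distrib, Finset.prod_const, ← map_prod, coeff_C_mul, coeff_X_pow]
    by_cases h : k = s.card
    · simp [h]
    · simp [h, Ne.symm h]
  rw [Finset.sum_congr rfl fun s _ => hterm s, Finset.sum_ite, Finset.sum_const_zero, add_zero,
    esymmVal]
  congr 1
  rw [Finset.powersetCard_eq_filter]

lemma prod_comp_count {ι β M : Type*} [Fintype ι] [DecidableEq β] [Fintype β] [CommMonoid M]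
    (x : ι → β) (f : β → M) :
    ∏ t, f (x t) = ∏ c : β, f c ^ (Finset.univ.filter (fun t => x t = c)).card := by
  rw [← Finset.prod_fiberwise_of_maps_to (fun t _ => Finset.mem_univ (x t)) (fun t => f (x t))]
  refine Finset.prod_congr rfl fun c _ => ?_
  rw [Finset.prod_congr rfl (fun t ht => show f (x t) = f c by
    simp only [Finset.mem_filter] at ht; rw [ht.2]), Finset.prod_const]

/-! ### mod-`D` reduction of `Lam` in characteristic `p` -/

lemma coeff_mul_expand {K : Type*} [CommRing K] (A B : K[X]) (D k : ℕ) (hD : 0 < D)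
    (hk : k < D) (hB : B.coeff 0 = 1) : (A * expand K D B).coeff k = A.coeff k := by
  rw [coeff_mul, Finset.sum_eq_single (k, 0)]
  · rw [coeff_expand hD]
    simp [hB]
  · rintro ⟨u, v⟩ huv hne
    simp only [Finset.HasAntidiagonal.mem_antidiagonal] at huv
    have hv : v ≠ 0 := by
      rintro rfl
      exact hne (by rw [show u = k by omega])
    rw [coeff_expand hD]
    have : ¬ (D ∣ v) := fun hdvd => by
      have := Nat.le_of_dvd (Nat.pos_of_ne_zero hv) hdvd
      omega
    simp [this]
  · intro h
    exact absurd (by simp) h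

variable {K : Type*} [CommRing K] (p : ℕ) [Fact p.Prime] [CharP K p]

lemma one_add_CX_pow_D (a : K) (s : ℕ) :
    (1 + C a * X) ^ (p ^ s) = 1 + C (a ^ (p ^ s)) * X ^ (p ^ s) := by
  rw [add_pow_char_pow, one_pow, mul_pow, ← C_pow]

lemma lamPoly_factor (l : ℕ) (a : Fin l → K) (m : Fin l → ℕ) (s : ℕ) (D : ℕ) (hD : D = p ^ s) :
    lamPoly l a m = lamPoly l a (fun i => m i % D)
      * expand K D (lamPoly l (fun i => a i ^ D) (fun i => m i / D)) := by
  subst hD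
  rw [lamPoly, lamPoly, lamPoly, map_prod, ← Finset.prod_mul_distrib]
  refine Finset.prod_congr rfl fun i _ => ?_
  rw [map_pow, map_add, map_one, map_mul, expand_C, expand_X, ← one_add_CX_pow_D p,
    ← pow_mul, ← pow_add]
  congr 1
  exact (Nat.mod_add_div _ _).symm

lemma lam_mod (s D : ℕ) (hD : D = p ^ s) (k : ℕ) (hk : k < D) (l : ℕ) (a : Fin l → K)
    (m m' : Fin l → ℕ) (h : ∀ i, m i % D = m' i % D) :
    Lam l a m (k : ℤ) = Lam l a m' (k : ℤ) := by
  have hp : p.Prime := Fact.out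
  have hD0 : 0 < D := hD ▸ pow_pos hp.pos s
  have key : ∀ mm : Fin l → ℕ,
      Lam l a mm (k : ℤ) = (lamPoly l a (fun i => mm i % D)).coeff k := by
    intro mm
    rw [lam_eq_coeff, lamPoly_factor p l a mm s D hD,
      coeff_mul_expand _ _ D k hD0 hk (coeff_lamPoly_zero _ _ _)]
  rw [key m, key m', show (fun i => m i % D) = (fun i => m' i % D) from funext h]

/-! ### counting -/

lemma sum_prod_pow {β : Type*} [Fintype β] [DecidableEq β] (n l : ℕ) (e : Fin (l + 1) ≃ β)
    (v : Fin l → ℂ) :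
    ∑ x : Fin n → β, ∏ i, v i ^ (Finset.univ.filter (fun t => x t = e i.succ)).card
      = (1 + ∑ i, v i) ^ n := by
  set w : β → ℂ := fun c => (Fin.cons (1:ℂ) v : Fin (l+1) → ℂ) (e.symm c) with hw
  have hw0 : w (e 0) = 1 := by simp [hw]
  have hws : ∀ i : Fin l, w (e i.succ) = v i := by intro i; simp [hw]
  have key : ∀ x : Fin n → β,
      ∏ i, v i ^ (Finset.univ.filter (fun t => x t = e i.succ)).card = ∏ t, w (x t) := by
    intro x
    rw [prod_comp_count x w, ← e.prod_comp (fun c => w c ^ (Finset.univ.filter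
      (fun t => x t = c)).card), Fin.prod_univ_succ, hw0, one_pow, one_mul]
    exact Finset.prod_congr rfl fun i _ => by rw [hws]
  rw [Finset.sum_congr rfl fun x _ => key x]
  have h2 : (1 + ∑ i, v i) = ∑ c : β, w c := by
    rw [← e.sum_comp w, Fin.sum_univ_succ, hw0]
    exact congrArg _ (Finset.sum_congr rfl fun i _ => (hws i).symm)
  rw [h2]
  have hpow : (∑ c : β, w c) ^ n = ∏ _t : Fin n, (∑ c : β, w c) := by
    rw [Finset.prod_const, Finset.card_univ, Fintype.card_fin]
  rw [hpow, Finset.prod_univ_sum (fun _ : Fin n => (Finset.univ : Finset β)) (fun _ c => w c),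
    ← Fintype.piFinset_univ]

/-! ### roots of unity filters -/

lemma zpow_sum0 {G₀ : Type*} [CommGroupWithZero G₀] (a : G₀) (ha : a ≠ 0) {ι : Type*}
    (s : Finset ι) (f : ι → ℤ) : a ^ (∑ i ∈ s, f i) = ∏ i ∈ s, a ^ f i := by
  classical
  induction s using Finset.cons_induction with
  | empty => simp
  | cons i s his ih => rw [Finset.sum_cons, Finset.prod_cons, zpow_add₀ ha, ih]

lemma geom_delta (D : ℕ) (hD : 0 < D) (ξ : ℂ) (hξ : IsPrimitiveRoot ξ D) (t : ℤ) :
    ∑ j ∈ Finset.range D, ξ ^ ((j : ℤ) * t) = if (D : ℤ) ∣ t then (D : ℂ) else 0 := by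
  have hterm : ∀ j : ℕ, ξ ^ ((j : ℤ) * t) = (ξ ^ t) ^ j := by
    intro j
    rw [mul_comm, zpow_mul, zpow_natCast]
  rw [Finset.sum_congr rfl fun j _ => hterm j]
  by_cases h : (D : ℤ) ∣ t
  · rw [(hξ.zpow_eq_one_iff_dvd t).2 h]
    simp [h]
  · have hz : ξ ^ t ≠ 1 := fun h1 => h ((hξ.zpow_eq_one_iff_dvd t).1 h1)
    rw [geom_sum_eq hz, if_neg h]
    have hD1 : (ξ ^ t) ^ D = 1 := by
      rw [← zpow_natCast (ξ ^ t) D, ← zpow_mul, mul_comm, zpow_mul, zpow_natCast, hξ.pow_eq_one,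
        one_zpow]
    rw [hD1, sub_self, zero_div]

lemma multi_delta (l D : ℕ) (hD : 0 < D) (ξ : ℂ) (hξ : IsPrimitiveRoot ξ D)
    (t : Fin l → ℤ) :
    ∑ j ∈ Fintype.piFinset (fun _ : Fin l => Finset.range D), ξ ^ (∑ i, (j i : ℤ) * t i)
      = if (∀ i, (D : ℤ) ∣ t i) then ((D : ℂ)) ^ l else 0 := by
  have hne : ξ ≠ 0 := hξ.ne_zero hD.ne'
  have h1 : ∀ j : Fin l → ℕ, ξ ^ (∑ i, (j i : ℤ) * t i) = ∏ i, ξ ^ ((j i : ℤ) * t i) :=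
    fun j => zpow_sum0 ξ hne _ _
  rw [Finset.sum_congr rfl fun j _ => h1 j,
    ← Finset.prod_univ_sum (fun _ => Finset.range D) (fun i j => ξ ^ ((j : ℤ) * t i))]
  rw [Finset.prod_congr rfl fun i _ => geom_delta D hD ξ hξ (t i)]
  by_cases h : ∀ i, (D : ℤ) ∣ t i
  · rw [if_pos h, Finset.prod_congr rfl fun i _ => if_pos (h i), Finset.prod_const]
    simp
  · rw [if_neg h]
    push_neg at h
    obtain ⟨i, hi⟩ := h
    exact Finset.prod_eq_zero (Finset.mem_univ i) (if_neg hi)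

/-! ### arithmetic helpers -/

lemma nu_nu (D a : ℕ) (h : a < D) : (D - (D - a) % D) % D = a := by
  rcases Nat.eq_zero_or_pos a with rfl | ha
  · simp
  · rw [Nat.mod_eq_of_lt (show D - a < D by omega), Nat.sub_sub_self h.le, Nat.mod_eq_of_lt h]

lemma nu_add_self (D a : ℕ) (h : a < D) : D ∣ ((D - a) % D + a) := by
  rcases Nat.eq_zero_or_pos a with rfl | ha
  · simp
  · rw [Nat.mod_eq_of_lt (show D - a < D by omega), Nat.sub_add_cancel h.le]

lemma dvd_sub_mod_int (D m : ℕ) : (D:ℤ) ∣ (m:ℤ) - ((m % D : ℕ) : ℤ) := by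
  refine ⟨(m:ℤ) / D, ?_⟩
  push_cast
  have := Int.mul_ediv_add_emod (m : ℤ) (D : ℤ)
  linarith

lemma dvd_iff_mod (D m b : ℕ) (hb : b < D) : ((D:ℤ) ∣ (m:ℤ) - (b:ℤ)) ↔ b = m % D := by
  rw [show ((D:ℤ) ∣ (m:ℤ) - (b:ℤ)) ↔ (b:ℤ) ≡ (m:ℤ) [ZMOD (D:ℤ)] from (Int.modEq_iff_dvd).symm]
  constructor
  · intro h
    have h' : (b:ℤ) % D = (m:ℤ) % D := h
    have h2 : ((b % D : ℕ) : ℤ) = ((m % D : ℕ) : ℤ) := by push_cast; exact h'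
    have h3 : b % D = m % D := by exact_mod_cast h2
    rw [← h3, Nat.mod_eq_of_lt hb]
  · intro h
    show (b:ℤ) % D = (m:ℤ) % D
    have h2 : ((b % D : ℕ) : ℤ) = ((m % D : ℕ) : ℤ) := by rw [Nat.mod_eq_of_lt hb, ← h]
    push_cast at h2
    exact h2

lemma mplus_toNat_mod (D b : ℕ) (hD : 0 < D) (hb : b < D) :
    (mplus D (b : ℤ)).toNat % D = b % D := by
  unfold mplus
  rcases Nat.eq_zero_or_pos b with rfl | hbpos
  · simp [Nat.mod_self]
  · rw [if_pos (by exact_mod_cast hbpos)]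
    simp

/-! ### sorting -/

def msOf {l : ℕ} (f : Fin l → ℕ) : Multiset ℕ := (List.ofFn f : List ℕ)

lemma msOf_comp_perm {l : ℕ} (f : Fin l → ℕ) (σ : Equiv.Perm (Fin l)) :
    msOf (f ∘ σ) = msOf f := by
  unfold msOf
  rw [Multiset.coe_eq_coe]
  have h1 : List.ofFn (f ∘ σ) = (List.ofFn σ).map f := by
    rw [List.map_ofFn]
  have h2 : (List.ofFn σ).Perm (List.ofFn (id : Fin l → Fin l)) := by
    apply List.perm_of_nodup_nodup_toFinset_eq
    · exact (List.nodup_ofFn).2 σ.injective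
    · exact (List.nodup_ofFn).2 fun a b h => h
    · ext i
      simp [List.mem_ofFn]
      exact ⟨σ.symm i, σ.apply_symm_apply i⟩
  rw [h1]
  calc ((List.ofFn σ).map f).Perm ((List.ofFn (id : Fin l → Fin l)).map f) := h2.map f
    _ = List.ofFn f := by rw [List.map_ofFn]; rfl

def sortDesc {l : ℕ} (j : Fin l → ℕ) : Fin l → ℕ := fun i => j (Tuple.sort j (Fin.rev i))

lemma antitone_sortDesc {l : ℕ} (j : Fin l → ℕ) : Antitone (sortDesc j) := by
  intro a b hab
  exact Tuple.monotone_sort j (by exact Fin.rev_le_rev.2 hab)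

lemma msOf_sortDesc {l : ℕ} (j : Fin l → ℕ) : msOf (sortDesc j) = msOf j := by
  have h : sortDesc j = (j ∘ (Tuple.sort j)) ∘ (Fin.revPerm : Equiv.Perm (Fin l)) := rfl
  rw [h, msOf_comp_perm (j ∘ Tuple.sort j) Fin.revPerm, msOf_comp_perm j (Tuple.sort j)]

lemma antitone_msOf_eq {l : ℕ} {f g : Fin l → ℕ} (hf : Antitone f) (hg : Antitone g)
    (h : msOf f = msOf g) : f = g := by
  unfold msOf at h
  rw [Multiset.coe_eq_coe] at h
  haveI : IsAntisymm ℕ (· ≥ ·) := ⟨fun a b h1 h2 => le_antisymm h2 h1⟩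
  have hsf : (List.ofFn f).Pairwise (· ≥ ·) := List.pairwise_ofFn.2 fun i j hij => hf hij.le
  have hsg : (List.ofFn g).Pairwise (· ≥ ·) := List.pairwise_ofFn.2 fun i j hij => hg hij.le
  exact List.ofFn_injective (List.Perm.eq_of_pairwise (fun a b _ _ h1 h2 => le_antisymm h2 h1) hsf hsg h)

lemma sortDesc_eq_iff {l : ℕ} {j jj : Fin l → ℕ} (hjj : Antitone jj) :
    sortDesc j = jj ↔ msOf j = msOf jj := by
  constructor
  · rintro rfl; exact (msOf_sortDesc j).symm
  · intro h
    exact antitone_msOf_eq (antitone_sortDesc j) hjj ((msOf_sortDesc j).trans h)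

lemma sum_fin_eq_msOf {l : ℕ} (f : Fin l → ℕ) (fn : ℕ → ℂ) :
    ∑ i, fn (f i) = ((msOf f).map fn).sum := by
  unfold msOf
  rw [Multiset.map_coe, Multiset.sum_coe, List.map_ofFn, List.sum_ofFn]
  rfl

lemma ofFn_getD {l : ℕ} (γ : List ℕ) (h : γ.length = l) :
    List.ofFn (fun i : Fin l => γ.getD (i : ℕ) 0) = γ := by
  apply List.ext_getElem
  · simp [h]
  · intro i h1 h2
    simp only [List.getElem_ofFn]
    rw [List.getD_eq_getElem γ 0 (by omega)]

lemma fiber_perm_sum (l D : ℕ) (jj : Fin l → ℕ) (hjj : Antitone jj)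
    (hjjD : ∀ i, jj i < D) (F : (Fin l → ℕ) → ℂ) :
    ∑ j ∈ (Fintype.piFinset fun _ : Fin l => Finset.range D).filter
        (fun j => sortDesc j = jj), F j
      = ∑ γ ∈ (List.ofFn jj).permutations.toFinset, F (fun i => γ.getD (Fin.rev i : ℕ) 0) := by
  have hleft : ∀ j : Fin l → ℕ,
      (fun i : Fin l => (List.ofFn fun i' : Fin l => j (Fin.rev i')).getD
        ((Fin.rev i : Fin l) : ℕ) 0) = j := by
    intro j
    funext i
    have hlt : ((Fin.rev i : Fin l) : ℕ) < (List.ofFn (fun i' : Fin l => j (Fin.rev i'))).length := by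
      rw [List.length_ofFn]; exact (Fin.rev i).isLt
    show (List.ofFn fun i' : Fin l => j (Fin.rev i')).getD ((Fin.rev i : Fin l) : ℕ) 0 = j i
    rw [List.getD_eq_getElem _ 0 hlt, List.getElem_ofFn]
    congr 1
    have hi := i.isLt
    apply Fin.ext
    simp [Fin.val_rev]
    omega
  refine Finset.sum_nbij' (i := fun j => List.ofFn (fun i => j (Fin.rev i)))
    (j := fun γ => (fun i => γ.getD (Fin.rev i : ℕ) 0)) ?_ ?_ ?_ ?_ ?_
  · intro j hj
    simp only [Finset.mem_filter, Fintype.mem_piFinset, Finset.mem_range] at hj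
    rw [List.mem_toFinset, List.mem_permutations, ← Multiset.coe_eq_coe]
    have h1 : (List.ofFn (fun i => j (Fin.rev i)) : Multiset ℕ) = msOf (j ∘ Fin.revPerm) := rfl
    have h2 : (List.ofFn jj : Multiset ℕ) = msOf jj := rfl
    rw [h1, h2, msOf_comp_perm j Fin.revPerm]
    exact ((sortDesc_eq_iff hjj).1 hj.2)
  · intro γ hγ
    rw [List.mem_toFinset, List.mem_permutations] at hγ
    have hlen : γ.length = l := by rw [hγ.length_eq, List.length_ofFn]
    have hofFn : List.ofFn (fun i : Fin l => γ.getD (i : ℕ) 0) = γ := ofFn_getD γ hlen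
    simp only [Finset.mem_filter, Fintype.mem_piFinset, Finset.mem_range]
    constructor
    · intro i
      have hmem : γ.getD ((Fin.rev i : Fin l) : ℕ) 0 ∈ γ := by
        rw [List.getD_eq_getElem γ 0 (by rw [hlen]; exact (Fin.rev i).isLt)]
        exact List.getElem_mem _
      rw [hγ.mem_iff] at hmem
      rw [List.mem_ofFn] at hmem
      obtain ⟨i', hi'⟩ := hmem
      rw [← hi']
      exact hjjD i'
    · rw [sortDesc_eq_iff hjj]
      have h3 : msOf (fun i : Fin l => γ.getD ((Fin.rev i : Fin l) : ℕ) 0)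
          = msOf ((fun i : Fin l => γ.getD ((i : Fin l) : ℕ) 0)
              ∘ (Fin.revPerm : Equiv.Perm (Fin l))) := rfl
      rw [h3, msOf_comp_perm]
      show ((List.ofFn (fun i : Fin l => γ.getD (i : ℕ) 0) : List ℕ) : Multiset ℕ)
          = ((List.ofFn jj : List ℕ) : Multiset ℕ)
      rw [hofFn, Multiset.coe_eq_coe]
      exact hγ
  · intro j hj
    exact hleft j
  · intro γ hγ
    rw [List.mem_toFinset, List.mem_permutations] at hγ
    have hlen : γ.length = l := by rw [hγ.length_eq, List.length_ofFn]
    have h4 : (fun i : Fin l => γ.getD ((Fin.rev (Fin.rev i)) : ℕ) 0)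
        = fun i : Fin l => γ.getD (i : ℕ) 0 := by
      funext i; rw [Fin.rev_rev]
    show List.ofFn (fun i : Fin l => γ.getD ((Fin.rev (Fin.rev i)) : ℕ) 0) = γ
    rw [h4]
    exact ofFn_getD γ hlen
  · intro j hj
    exact (congrArg F (hleft j)).symm

lemma step_perx (l D : ℕ) (hD0 : 0 < D) (ξ : ℂ) (hprim : IsPrimitiveRoot ξ D)
    (g : (Fin l → ℕ) → ℂ) (m : Fin l → ℕ) :
    g (fun i => m i % D)
      = ∑ j ∈ Fintype.piFinset (fun _ : Fin l => Finset.range D),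
          (∑ b ∈ Fintype.piFinset (fun _ : Fin l => Finset.range D),
            g b * ((D:ℂ) ^ l)⁻¹ * ξ ^ (-((∑ i, j i * b i : ℕ) : ℤ)))
          * ξ ^ (∑ i, j i * m i) := by
  have hξ0 : ξ ≠ 0 := hprim.ne_zero hD0.ne'
  have hDl : ((D:ℂ) ^ l) ≠ 0 := pow_ne_zero _ (Nat.cast_ne_zero.2 hD0.ne')
  have hA : ∀ j b : Fin l → ℕ,
      (g b * ((D:ℂ) ^ l)⁻¹ * ξ ^ (-((∑ i, j i * b i : ℕ) : ℤ))) * ξ ^ (∑ i, j i * m i)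
        = g b * ((D:ℂ) ^ l)⁻¹ * ξ ^ (∑ i, (j i : ℤ) * ((m i : ℤ) - (b i : ℤ))) := by
    intro j b
    rw [mul_assoc (g b * ((D:ℂ) ^ l)⁻¹), ← zpow_natCast ξ (∑ i, j i * m i), ← zpow_add₀ hξ0]
    congr 2
    push_cast
    rw [Finset.sum_congr rfl (fun i _ => mul_sub ((j i : ℤ)) ((m i : ℤ)) ((b i : ℤ))),
      Finset.sum_sub_distrib]
    ring
  symm
  calc ∑ j ∈ Fintype.piFinset (fun _ : Fin l => Finset.range D),
          (∑ b ∈ Fintype.piFinset (fun _ : Fin l => Finset.range D),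
            g b * ((D:ℂ) ^ l)⁻¹ * ξ ^ (-((∑ i, j i * b i : ℕ) : ℤ)))
          * ξ ^ (∑ i, j i * m i)
      = ∑ j ∈ Fintype.piFinset (fun _ : Fin l => Finset.range D),
          ∑ b ∈ Fintype.piFinset (fun _ : Fin l => Finset.range D),
            g b * ((D:ℂ) ^ l)⁻¹ * ξ ^ (∑ i, (j i : ℤ) * ((m i : ℤ) - (b i : ℤ))) := by
        refine Finset.sum_congr rfl fun j _ => ?_
        rw [Finset.sum_mul]
        exact Finset.sum_congr rfl fun b _ => hA j b
    _ = ∑ b ∈ Fintype.piFinset (fun _ : Fin l => Finset.range D),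
          g b * ((D:ℂ) ^ l)⁻¹ *
            (if (∀ i, (D:ℤ) ∣ ((m i : ℤ) - (b i : ℤ))) then ((D:ℂ)) ^ l else 0) := by
        rw [Finset.sum_comm]
        refine Finset.sum_congr rfl fun b _ => ?_
        rw [← Finset.mul_sum, multi_delta l D hD0 ξ hprim (fun i => (m i : ℤ) - (b i : ℤ))]
    _ = g (fun i => m i % D) := by
        rw [Finset.sum_eq_single_of_mem (fun i => m i % D)
          (by simp only [Fintype.mem_piFinset, Finset.mem_range]
              exact fun i => Nat.mod_lt _ hD0)]
        · rw [if_pos (fun i => dvd_sub_mod_int D (m i)), mul_assoc,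
            inv_mul_cancel₀ hDl, mul_one]
        · intro b hb hne
          simp only [Fintype.mem_piFinset, Finset.mem_range] at hb
          rw [if_neg, mul_zero]
          intro hall
          exact hne (funext fun i => (dvd_iff_mod D (m i) (b i) (hb i)).1 (hall i))

end StmtAux

/-- Closed formula for `S_{F_q}(e_{n,k})`, `q = p^r`, `D = p^{⌊log_p k⌋+1}`:
`S_{F_q}(e_{n,k}) = ∑_{j_1=0}^{D-1} ∑_{j_2=0}^{j_1} ⋯ ∑_{j_{q-1}=0}^{j_{q-2}}
c_{j_1,…,j_{q-1}}(k) (1 + ξ_D^{-j_1} + ⋯ + ξ_D^{-j_{q-1}})^n`, the nested decreasing sums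
being encoded as a sum over weakly decreasing tuples, with
`c_{j}(k) = (1/D^{q-1}) ∑_b ξ_p^{Tr(F^{(p)}_{k;F_q}(b_1,…,b_{q-1}))}
∑_{j' ∈ Sym(j)} ξ_D^{j_1' b_{q-1} + ⋯ + j_{q-1}' b_1}` and
`F^{(p)}_{k;F_q}(m) = Λ^{(p)}_{α_1,…,α_{q-1}}(k, m) = Λ_{α_1,…,α_{q-1}}(k, m⁺)`. -/
theorem stmt13 (p : ℕ) [Fact p.Prime] (r : ℕ) (hr : 1 ≤ r) (n k : ℕ)
    (hn : 0 < n) (hk : 1 < k)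
    (D : ℕ) (hD : D = p ^ (Nat.log p k + 1))
    (K : Type*) [Field K] [Fintype K] [Algebra (ZMod p) K]
    (hcard : Fintype.card K = p ^ r)
    (α : Fin (p ^ r - 1) → K)
    (hinj : Function.Injective α) (h0 : ∀ i, α i ≠ 0)
    (ξD ξp : ℂ)
    (hξD : ξD = Complex.exp (2 * (Real.pi : ℂ) * Complex.I / D))
    (hξp : ξp = Complex.exp (2 * (Real.pi : ℂ) * Complex.I / p))
    (c : (Fin (p ^ r - 1) → ℕ) → ℂ)
    (hc : ∀ jj, c jj = (1 / (D : ℂ) ^ (p ^ r - 1)) *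
      ∑ b ∈ Fintype.piFinset fun _ : Fin (p ^ r - 1) => Finset.range D,
        ξp ^ ((Algebra.trace (ZMod p) K
            (Lam (p ^ r - 1) α (fun i => (mplus D (b i : ℤ)).toNat) (k : ℤ))).val) *
          ∑ γ ∈ (List.ofFn jj).permutations.toFinset,
            ξD ^ (∑ i : Fin (p ^ r - 1), γ.getD (i : ℕ) 0 * b (Fin.rev i))) :
    (∑ x : Fin n → K, ξp ^ ((Algebra.trace (ZMod p) K (esymmVal n k x)).val))
      = ∑ jj ∈ (Fintype.piFinset fun _ : Fin (p ^ r - 1) => Finset.range D).filter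
            (fun jj => ∀ i i' : Fin (p ^ r - 1), i ≤ i' → jj i' ≤ jj i),
          c jj * (1 + ∑ i : Fin (p ^ r - 1), ξD ^ (-(jj i : ℤ))) ^ n := by
  classical
  have hp : p.Prime := Fact.out
  have hq : (p ^ r - 1) + 1 = p ^ r := Nat.succ_pred_eq_of_pos (pow_pos hp.pos r)
  have hD0 : 0 < D := by rw [hD]; exact pow_pos hp.pos _
  have hkD : k < D := by rw [hD]; exact Nat.lt_pow_succ_log_self hp.one_lt k
  have hcharK : (p : K) = 0 := by
    rw [show ((p : K)) = algebraMap (ZMod p) K ((p : ZMod p)) from (map_natCast _ p).symm,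
      ZMod.natCast_self, map_zero]
  haveI hcp : CharP K p := (CharP.charP_iff_prime_eq_zero hp).mpr hcharK
  have hconsinj : Function.Injective (Fin.cons (0:K) α : Fin ((p ^ r - 1)+1) → K) := by
    intro i j hij
    rcases Fin.eq_zero_or_eq_succ i with rfl | ⟨i', rfl⟩ <;>
      rcases Fin.eq_zero_or_eq_succ j with rfl | ⟨j', rfl⟩
    · rfl
    · rw [Fin.cons_zero, Fin.cons_succ] at hij; exact absurd hij.symm (h0 j')
    · rw [Fin.cons_zero, Fin.cons_succ] at hij; exact absurd hij (h0 i')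
    · rw [Fin.cons_succ, Fin.cons_succ] at hij; rw [hinj hij]
  have hbij : Function.Bijective (Fin.cons (0:K) α : Fin ((p ^ r - 1)+1) → K) := by
    rw [Fintype.bijective_iff_injective_and_card]
    exact ⟨hconsinj, by rw [Fintype.card_fin, hcard, hq]⟩
  set e : Fin ((p ^ r - 1)+1) ≃ K := Equiv.ofBijective _ hbij with he
  have he0 : e 0 = 0 := by rw [he, Equiv.ofBijective_apply]; exact Fin.cons_zero _ _
  have hes : ∀ i : Fin (p ^ r - 1), e i.succ = α i := fun i => by
    rw [he, Equiv.ofBijective_apply]; exact Fin.cons_succ _ _ _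
  have hprim : IsPrimitiveRoot ξD D := by rw [hξD]; exact Complex.isPrimitiveRoot_exp D hD0.ne'
  have hξ0 : ξD ≠ 0 := hprim.ne_zero hD0.ne'
  have hDl : ((D:ℂ) ^ (p ^ r - 1)) ≠ 0 := pow_ne_zero _ (Nat.cast_ne_zero.2 hD0.ne')
  have hord : ∀ s t : ℤ, (D:ℤ) ∣ (s - t) → ξD ^ s = ξD ^ t := by
    intro s t hst
    have h1 : ξD ^ (s - t) = 1 := (hprim.zpow_eq_one_iff_dvd _).2 hst
    calc ξD ^ s = ξD ^ (t + (s - t)) := by congr 1; ring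
      _ = ξD ^ t * ξD ^ (s - t) := zpow_add₀ hξ0 _ _
      _ = ξD ^ t := by rw [h1, mul_one]
  set g : (Fin (p ^ r - 1) → ℕ) → ℂ := fun b => ξp ^ ((Algebra.trace (ZMod p) K
      (Lam (p ^ r - 1) α (fun i => (mplus D (b i : ℤ)).toNat) (k : ℤ))).val) with hg
  -- Step 1
  have step1 : ∀ x : Fin n → K,
      ξp ^ ((Algebra.trace (ZMod p) K (esymmVal n k x)).val)
        = g (fun i => (Finset.univ.filter (fun t => x t = α i)).card % D) := by
    intro x
    have hesymm : esymmVal n k x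
        = Lam (p ^ r - 1) α (fun i => (Finset.univ.filter (fun t => x t = α i)).card) (k : ℤ) := by
      rw [StmtAux.esymm_eq_coeff, StmtAux.lam_eq_coeff]
      congr 1
      rw [StmtAux.prod_comp_count x (fun c' => 1 + Polynomial.C c' * Polynomial.X),
        ← e.prod_comp (fun c' => (1 + Polynomial.C c' * Polynomial.X)
          ^ (Finset.univ.filter (fun t => x t = c')).card),
        Fin.prod_univ_succ, he0]
      simp only [map_zero, zero_mul, add_zero, one_pow, one_mul]
      rw [StmtAux.lamPoly]
      exact Finset.prod_congr rfl fun i _ => by rw [hes i]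
    have hlam : Lam (p ^ r - 1) α (fun i => (Finset.univ.filter (fun t => x t = α i)).card) (k : ℤ)
        = Lam (p ^ r - 1) α (fun i => (mplus D
            (((Finset.univ.filter (fun t => x t = α i)).card % D : ℕ) : ℤ)).toNat) (k : ℤ) := by
      refine StmtAux.lam_mod p _ D hD k hkD (p ^ r - 1) α _ _ (fun i => ?_)
      rw [StmtAux.mplus_toNat_mod D _ hD0 (Nat.mod_lt _ hD0),
        Nat.mod_eq_of_lt (Nat.mod_lt _ hD0)]
    rw [hesymm, hlam, hg]
  -- counting
  have count : ∀ j : Fin (p ^ r - 1) → ℕ,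
      (∑ x : Fin n → K,
        ξD ^ (∑ i, j i * (Finset.univ.filter (fun t => x t = α i)).card))
      = (1 + ∑ i, ξD ^ (j i)) ^ n := by
    intro j
    have hx : ∀ x : Fin n → K,
        ξD ^ (∑ i, j i * (Finset.univ.filter (fun t => x t = α i)).card)
          = ∏ i, (ξD ^ (j i)) ^ (Finset.univ.filter (fun t => x t = e i.succ)).card := by
      intro x
      rw [← Finset.prod_pow_eq_pow_sum]
      exact Finset.prod_congr rfl fun i _ => by rw [pow_mul, hes i]
    rw [Finset.sum_congr rfl fun x _ => hx x,
      StmtAux.sum_prod_pow n (p ^ r - 1) e (fun i => ξD ^ (j i))]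
  rw [Finset.sum_congr rfl fun x _ => step1 x,
    Finset.sum_congr rfl fun x _ => StmtAux.step_perx (p ^ r - 1) D hD0 ξD hprim g
      (fun i => (Finset.univ.filter (fun t => x t = α i)).card)]
  rw [Finset.sum_comm]
  rw [Finset.sum_congr rfl fun j _ => (Finset.mul_sum _ _ _).symm]
  rw [Finset.sum_congr rfl fun j _ => congrArg _ (count j)]
  -- reindexing j ↦ ν j
  have reindex :
      ∑ j ∈ Fintype.piFinset (fun _ : Fin (p ^ r - 1) => Finset.range D),
          (∑ b ∈ Fintype.piFinset (fun _ : Fin (p ^ r - 1) => Finset.range D),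
            g b * ((D:ℂ) ^ (p ^ r - 1))⁻¹ * ξD ^ (-((∑ i, j i * b i : ℕ) : ℤ)))
          * (1 + ∑ i, ξD ^ (j i)) ^ n
      = ∑ j ∈ Fintype.piFinset (fun _ : Fin (p ^ r - 1) => Finset.range D),
          (∑ b ∈ Fintype.piFinset (fun _ : Fin (p ^ r - 1) => Finset.range D),
            g b * ((D:ℂ) ^ (p ^ r - 1))⁻¹ * ξD ^ ((∑ i, j i * b i : ℕ)))
          * (1 + ∑ i, ξD ^ (-(j i : ℤ))) ^ n := by
    refine Finset.sum_nbij' (i := fun j (i : Fin (p ^ r - 1)) => (D - j i) % D)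
      (j := fun j (i : Fin (p ^ r - 1)) => (D - j i) % D) ?_ ?_ ?_ ?_ ?_
    · intro j hj
      simp only [Fintype.mem_piFinset, Finset.mem_range]
      exact fun i => Nat.mod_lt _ hD0
    · intro j hj
      simp only [Fintype.mem_piFinset, Finset.mem_range]
      exact fun i => Nat.mod_lt _ hD0
    · intro j hj
      simp only [Fintype.mem_piFinset, Finset.mem_range] at hj
      funext i
      exact StmtAux.nu_nu D (j i) (hj i)
    · intro j hj
      simp only [Fintype.mem_piFinset, Finset.mem_range] at hj
      funext i
      exact StmtAux.nu_nu D (j i) (hj i)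
    · intro j hj
      simp only [Fintype.mem_piFinset, Finset.mem_range] at hj
      have hfac2 : ∀ i : Fin (p ^ r - 1),
          ξD ^ (-((((D - j i) % D : ℕ)) : ℤ)) = ξD ^ (j i) := by
        intro i
        have hdvd : (D:ℤ) ∣ (-((((D - j i) % D : ℕ)) : ℤ) - ((j i : ℕ) : ℤ)) := by
          have h1 : D ∣ ((D - j i) % D + j i) := StmtAux.nu_add_self D (j i) (hj i)
          have h2 : (D:ℤ) ∣ ((((D - j i) % D + j i : ℕ)) : ℤ) := Int.natCast_dvd_natCast.2 h1
          have h3 : (-((((D - j i) % D : ℕ)) : ℤ) - ((j i : ℕ) : ℤ))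
              = -((((D - j i) % D + j i : ℕ)) : ℤ) := by push_cast; ring
          rw [h3]
          exact dvd_neg.2 h2
        have h4 := hord _ _ hdvd
        rw [zpow_natCast] at h4
        exact h4
      have hsum : ∀ b : Fin (p ^ r - 1) → ℕ,
          ξD ^ (-((∑ i, j i * b i : ℕ) : ℤ))
            = ξD ^ ((∑ i, ((D - j i) % D) * b i : ℕ)) := by
        intro b
        have hdvd : D ∣ ((∑ i, ((D - j i) % D) * b i) + (∑ i, j i * b i)) := by
          rw [← Finset.sum_add_distrib]
          refine Finset.dvd_sum fun i _ => ?_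
          rw [← add_mul]
          exact Dvd.dvd.mul_right (StmtAux.nu_add_self D (j i) (hj i)) _
        have h2 : (D:ℤ) ∣ (((∑ i, ((D - j i) % D) * b i : ℕ)) : ℤ)
            - (-((∑ i, j i * b i : ℕ) : ℤ)) := by
          have h3 : (((∑ i, ((D - j i) % D) * b i : ℕ)) : ℤ)
              - (-((∑ i, j i * b i : ℕ) : ℤ))
              = (((∑ i, ((D - j i) % D) * b i) + (∑ i, j i * b i) : ℕ) : ℤ) := by
            push_cast; ring
          rw [h3]
          exact Int.natCast_dvd_natCast.2 hdvd
        have h4 := hord _ _ h2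
        rw [zpow_natCast] at h4
        exact h4.symm
      congr 1
      · refine Finset.sum_congr rfl fun b _ => ?_
        rw [hsum b]
      · congr 1
        refine congrArg _ (Finset.sum_congr rfl fun i _ => ?_)
        exact (hfac2 i).symm
  rw [reindex]
  -- fiberwise grouping by sortDesc
  rw [← Finset.sum_fiberwise_of_maps_to (g := StmtAux.sortDesc)
      (t := (Fintype.piFinset fun _ : Fin (p ^ r - 1) => Finset.range D).filter
        (fun jj => ∀ i i' : Fin (p ^ r - 1), i ≤ i' → jj i' ≤ jj i))
      (by
        intro j hj
        simp only [Finset.mem_filter, Fintype.mem_piFinset, Finset.mem_range] at hj ⊢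
        refine ⟨fun i => hj _, fun i i' hii => StmtAux.antitone_sortDesc j hii⟩)
      (fun j => (∑ b ∈ Fintype.piFinset (fun _ : Fin (p ^ r - 1) => Finset.range D),
            g b * ((D:ℂ) ^ (p ^ r - 1))⁻¹ * ξD ^ ((∑ i, j i * b i : ℕ)))
          * (1 + ∑ i, ξD ^ (-(j i : ℤ))) ^ n)]
  refine Finset.sum_congr rfl fun jj hjj => ?_
  simp only [Finset.mem_filter, Fintype.mem_piFinset, Finset.mem_range] at hjj
  obtain ⟨hjjbox, hjjanti'⟩ := hjj
  have hanti : Antitone jj := fun a b hab => hjjanti' a b hab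
  have hfac : ∀ j : Fin (p ^ r - 1) → ℕ, StmtAux.sortDesc j = jj →
      (1 + ∑ i, ξD ^ (-(j i : ℤ))) = (1 + ∑ i, ξD ^ (-(jj i : ℤ))) := by
    intro j hsd
    have hms : StmtAux.msOf j = StmtAux.msOf jj := (StmtAux.sortDesc_eq_iff hanti).1 hsd
    have h1 := StmtAux.sum_fin_eq_msOf j (fun t => ξD ^ (-(t : ℤ)))
    have h2 := StmtAux.sum_fin_eq_msOf jj (fun t => ξD ^ (-(t : ℤ)))
    congr 1
    rw [h1, h2, hms]
  calc ∑ j ∈ ((Fintype.piFinset fun _ : Fin (p ^ r - 1) => Finset.range D).filter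
          (fun j => StmtAux.sortDesc j = jj)),
        (∑ b ∈ Fintype.piFinset (fun _ : Fin (p ^ r - 1) => Finset.range D),
          g b * ((D:ℂ) ^ (p ^ r - 1))⁻¹ * ξD ^ ((∑ i, j i * b i : ℕ)))
          * (1 + ∑ i, ξD ^ (-(j i : ℤ))) ^ n
      = ∑ j ∈ ((Fintype.piFinset fun _ : Fin (p ^ r - 1) => Finset.range D).filter
          (fun j => StmtAux.sortDesc j = jj)),
        (∑ b ∈ Fintype.piFinset (fun _ : Fin (p ^ r - 1) => Finset.range D),
          g b * ((D:ℂ) ^ (p ^ r - 1))⁻¹ * ξD ^ ((∑ i, j i * b i : ℕ)))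
          * (1 + ∑ i, ξD ^ (-(jj i : ℤ))) ^ n := by
        refine Finset.sum_congr rfl fun j hj => ?_
        rw [hfac j (Finset.mem_filter.1 hj).2]
    _ = (∑ j ∈ ((Fintype.piFinset fun _ : Fin (p ^ r - 1) => Finset.range D).filter
          (fun j => StmtAux.sortDesc j = jj)),
        (∑ b ∈ Fintype.piFinset (fun _ : Fin (p ^ r - 1) => Finset.range D),
          g b * ((D:ℂ) ^ (p ^ r - 1))⁻¹ * ξD ^ ((∑ i, j i * b i : ℕ))))
          * (1 + ∑ i, ξD ^ (-(jj i : ℤ))) ^ n := (Finset.sum_mul _ _ _).symm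
    _ = c jj * (1 + ∑ i, ξD ^ (-(jj i : ℤ))) ^ n := by
        congr 1
        rw [Finset.sum_comm]
        have hb : ∀ b : Fin (p ^ r - 1) → ℕ,
            (∑ j ∈ ((Fintype.piFinset fun _ : Fin (p ^ r - 1) => Finset.range D).filter
                (fun j => StmtAux.sortDesc j = jj)),
              g b * ((D:ℂ) ^ (p ^ r - 1))⁻¹ * ξD ^ ((∑ i, j i * b i : ℕ)))
            = g b * ((D:ℂ) ^ (p ^ r - 1))⁻¹ *
                ∑ γ ∈ (List.ofFn jj).permutations.toFinset,
                  ξD ^ (∑ i : Fin (p ^ r - 1), γ.getD (i : ℕ) 0 * b (Fin.rev i)) := by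
          intro b
          rw [← Finset.mul_sum,
            StmtAux.fiber_perm_sum (p ^ r - 1) D jj hanti hjjbox
              (fun j => ξD ^ (∑ i, j i * b i))]
          congr 1
          refine Finset.sum_congr rfl fun γ _ => ?_
          congr 1
          refine Fintype.sum_equiv Fin.revPerm _ _ (fun i => ?_)
          simp [Fin.rev_rev]
        rw [Finset.sum_congr rfl fun b _ => hb b, hc jj, Finset.mul_sum]
        refine Finset.sum_congr rfl fun b _ => ?_
        simp only [hg]
        rw [one_div]
        ring

end
end

section
/- Let n and k > 1 be positive integers, p a prime, q = p^r with r ≥ 1, and D = p^{⌊log_p(k)⌋+1}. For each tuple (a_1, ..., a_{q−1}) with 0 ≤ a_{q−1} ≤ ... ≤ a_2 ≤ a_1 ≤ D−1, let M_{a_1,...,a_{q−1}}(X) be the minimal polynomial over Q of the algebraic integer 1 + ξ_D^{a_1} + ... + ξ_D^{a_{q−1}}, where ξ_D = exp(2πi/D). Then the sequence (S_{F_q}(e_{n,k}))_{n≥1} satisfies the linear recurrence with integer coefficients whose characteristic polynomial is χ_{q,k}(X) = lcm of the polynomials M_{a_1,...,a_{q−1}}(X) over all tuples with 0 ≤ a_{q−1}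 ≤ ... ≤ a_1 ≤ D−1. -/
noncomputable section

open Polynomial

noncomputable section
open Polynomial Finset

lemma pow_mod_eq {D : ℕ} (ξ : ℂ) (hξ : ξ ^ D = 1) (a : ℕ) : ξ ^ (a % D) = ξ ^ a := by
  conv_rhs => rw [← Nat.div_add_mod a D]
  rw [pow_add, pow_mul, hξ, one_pow, one_mul]

lemma pow_val_add {D : ℕ} [NeZero D] (ξ : ℂ) (hξ : ξ ^ D = 1) (u v : ZMod D) :
    ξ ^ (u + v).val = ξ ^ u.val * ξ ^ v.val := by
  rw [ZMod.val_add, pow_mod_eq ξ hξ, pow_add]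

lemma pow_val_mul {D : ℕ} [NeZero D] (ξ : ℂ) (hξ : ξ ^ D = 1) (u v : ZMod D) :
    ξ ^ (u * v).val = (ξ ^ v.val) ^ u.val := by
  rw [ZMod.val_mul, pow_mod_eq ξ hξ, ← pow_mul, mul_comm (v.val)]

lemma sum_zmod_eq_sum_range {D : ℕ} [NeZero D] (f : ℕ → ℂ) :
    ∑ u : ZMod D, f u.val = ∑ j ∈ Finset.range D, f j := by
  refine Finset.sum_nbij' (fun u => u.val) (fun j => (j : ZMod D)) ?_ ?_ ?_ ?_ ?_
  · intro u _; exact Finset.mem_range.2 (ZMod.val_lt u)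
  · intro j _; exact Finset.mem_univ _
  · intro u _; simp [ZMod.natCast_val, ZMod.cast_id]
  · intro j hj; exact ZMod.val_natCast_of_lt (Finset.mem_range.1 hj)
  · intro u _; rfl

lemma char_orthogonality {D : ℕ} [NeZero D] (ξ : ℂ) (hprim : IsPrimitiveRoot ξ D)
    (v : ZMod D) : ∑ u : ZMod D, ξ ^ (u * v).val = if v = 0 then (D : ℂ) else 0 := by
  have hξ : ξ ^ D = 1 := hprim.pow_eq_one
  have h1 : ∀ u : ZMod D, ξ ^ (u * v).val = (ξ ^ v.val) ^ u.val := fun u => pow_val_mul ξ hξ u v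
  simp_rw [h1]
  rw [sum_zmod_eq_sum_range (fun j => (ξ ^ v.val) ^ j)]
  by_cases hv : v = 0
  · subst hv; simp [ZMod.val_zero]
  · rw [if_neg hv]
    have hζne : ξ ^ v.val ≠ 1 := by
      intro h
      have hdvd := (hprim.pow_eq_one_iff_dvd v.val).1 h
      have hvlt := ZMod.val_lt v
      have hvpos : 0 < v.val := Nat.pos_of_ne_zero (fun h' => hv ((ZMod.val_eq_zero v).1 h'))
      have := Nat.le_of_dvd hvpos hdvd
      omega
    rw [geom_sum_eq hζne D, ← pow_mul, mul_comm, pow_mul, hξ, one_pow, sub_self, zero_div]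
lemma fourier_inversion {D : ℕ} [NeZero D] (ξ : ℂ) (hprim : IsPrimitiveRoot ξ D)
    {σ : Type*} [Fintype σ] [DecidableEq σ] (G : (σ → ZMod D) → ℂ) (m : σ → ZMod D) :
    G m = ∑ t : σ → ZMod D,
      ((((D:ℂ) ^ Fintype.card σ)⁻¹ * ∑ b : σ → ZMod D, G b * ∏ c, ξ ^ (-(t c * b c)).val) *
        ∏ c, ξ ^ (t c * m c).val) := by
  have hξ : ξ ^ D = 1 := hprim.pow_eq_one
  have hD0 : (D:ℂ) ≠ 0 := Nat.cast_ne_zero.2 (NeZero.ne D)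
  symm
  calc
    ∑ t : σ → ZMod D,
        ((((D:ℂ) ^ Fintype.card σ)⁻¹ * ∑ b : σ → ZMod D, G b * ∏ c, ξ ^ (-(t c * b c)).val) *
          ∏ c, ξ ^ (t c * m c).val)
      = ((D:ℂ) ^ Fintype.card σ)⁻¹ * ∑ t : σ → ZMod D, ∑ b : σ → ZMod D,
          G b * ∏ c, ξ ^ (t c * (m c - b c)).val := by
        have h1 : ∀ t : σ → ZMod D,
            ((((D:ℂ) ^ Fintype.card σ)⁻¹ * ∑ b : σ → ZMod D, G b * ∏ c, ξ ^ (-(t c * b c)).val) *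
              ∏ c, ξ ^ (t c * m c).val)
            = ((D:ℂ) ^ Fintype.card σ)⁻¹ * ∑ b : σ → ZMod D,
                G b * ∏ c, ξ ^ (t c * (m c - b c)).val := by
          intro t
          rw [mul_assoc, Finset.sum_mul]
          congr 1
          refine Finset.sum_congr rfl fun b _ => ?_
          rw [mul_assoc]
          congr 1
          rw [← Finset.prod_mul_distrib]
          refine Finset.prod_congr rfl fun c _ => ?_
          rw [← pow_val_add ξ hξ]
          congr 1
          ring_nf
        rw [Finset.sum_congr rfl (fun t _ => h1 t), ← Finset.mul_sum]
    _ = ((D:ℂ) ^ Fintype.card σ)⁻¹ * ∑ b : σ → ZMod D,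
          (G b * ∑ t : σ → ZMod D, ∏ c, ξ ^ (t c * (m c - b c)).val) := by
        rw [Finset.sum_comm]
        congr 1
        refine Finset.sum_congr rfl fun b _ => ?_
        rw [Finset.mul_sum]
    _ = ((D:ℂ) ^ Fintype.card σ)⁻¹ * ∑ b : σ → ZMod D, G b *
          ∏ c, (if m c - b c = 0 then (D:ℂ) else 0) := by
        congr 1
        refine Finset.sum_congr rfl fun b _ => ?_
        congr 1
        rw [← Fintype.prod_sum (fun c u => ξ ^ ((u : ZMod D) * (m c - b c)).val)]
        exact Finset.prod_congr rfl fun c _ => char_orthogonality ξ hprim (m c - b c)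
    _ = G m := by
        rw [Finset.sum_eq_single m]
        · rw [Finset.prod_congr rfl (fun c _ => by rw [sub_self, if_pos rfl]),
            Finset.prod_const, Finset.card_univ, ← mul_assoc, mul_comm _ (G m), mul_assoc,
            inv_mul_cancel₀ (pow_ne_zero _ hD0), mul_one]
        · intro b _ hb
          have : ∃ c, m c - b c ≠ 0 := by
            by_contra h
            push_neg at h
            exact hb (funext fun c => (sub_eq_zero.1 (h c)).symm)
          obtain ⟨c0, hc0⟩ := this
          rw [Finset.prod_eq_zero (Finset.mem_univ c0)
            (show (if m c0 - b c0 = 0 then (D:ℂ) else 0) = 0 from if_neg hc0), mul_zero]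
        · intro h; exact absurd (Finset.mem_univ m) h
lemma prod_comp_count {M : Type*} [CommMonoid M] {K : Type*} [Fintype K] [DecidableEq K]
    {n : ℕ} (x : Fin n → K) (w : K → M) :
    ∏ i, w (x i) = ∏ c, w c ^ (Finset.univ.filter (fun i => x i = c)).card := by
  rw [← Finset.prod_fiberwise_of_maps_to (fun i _ => Finset.mem_univ (x i)) (fun i => w (x i))]
  refine Finset.prod_congr rfl fun c _ => ?_
  rw [Finset.prod_congr rfl (fun i hi => by
    rw [(Finset.mem_filter.1 hi).2]), Finset.prod_const]

lemma coeff_prod_one_add {R : Type*} [CommRing R] {ι : Type*} [DecidableEq ι]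
    (s : Finset ι) (x : ι → R) :
    ∀ k, (∏ i ∈ s, (1 + C (x i) * X)).coeff k
      = ∑ t ∈ s.powersetCard k, ∏ i ∈ t, x i := by
  induction s using Finset.induction_on with
  | empty =>
      intro k
      rcases k with _ | k
      · simp
      · rw [Finset.prod_empty, Polynomial.coeff_one]
        rw [show Finset.powersetCard (k+1) (∅ : Finset ι) = ∅ from
          Finset.powersetCard_eq_empty.2 (by simp)]
        simp
  | @insert a s ha ih =>
      intro k
      rw [Finset.prod_insert ha]
      rcases k with _ | k
      · rw [add_mul, one_mul, coeff_add, Polynomial.mul_coeff_zero, coeff_C_mul,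
          Polynomial.coeff_X_zero]
        rw [ih 0]
        simp [Finset.powersetCard_zero]
      · have expand : (1 + C (x a) * X) * (∏ i ∈ s, (1 + C (x i) * X))
            = (∏ i ∈ s, (1 + C (x i) * X)) + C (x a) * (X * ∏ i ∈ s, (1 + C (x i) * X)) := by
          ring
        rw [expand, coeff_add, coeff_C_mul, Polynomial.coeff_X_mul, ih, ih,
          Finset.powersetCard_succ_insert ha]
        rw [Finset.sum_union]
        · congr 1
          rw [Finset.sum_image (fun t ht t' ht' h => ?inj), Finset.mul_sum]
          case inj =>
            have hat : a ∉ t := fun H => ha ((Finset.mem_powersetCard.1 ht).1 H)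
            have hat' : a ∉ t' := fun H => ha ((Finset.mem_powersetCard.1 ht').1 H)
            rw [← Finset.erase_insert hat, ← Finset.erase_insert hat', h]
          refine Finset.sum_congr rfl fun t ht => ?_
          rw [Finset.prod_insert (fun H => ha ((Finset.mem_powersetCard.1 ht).1 H))]
        · rw [Finset.disjoint_right]
          rintro t ht hts
          obtain ⟨t', ht', rfl⟩ := Finset.mem_image.1 ht
          have : a ∈ insert a t' := Finset.mem_insert_self a t'
          exact ha ((Finset.mem_powersetCard.1 hts).1 this)
section CoeffCongr
variable {K : Type*} [CommRing K]

lemma coeff_mul_one_add_Xpow {D k : ℕ} (hk : k < D) (A B : Polynomial K)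
    (hB : ∃ t, B = 1 + X ^ D * t) : (A * B).coeff k = A.coeff k := by
  obtain ⟨t, rfl⟩ := hB
  have : A * (1 + X ^ D * t) = A + (A * t) * X ^ D := by ring
  rw [this, coeff_add, Polynomial.coeff_mul_X_pow', if_neg (by omega), add_zero]

lemma pred_mul {D : ℕ} {a b : Polynomial K} (ha : ∃ t, a = 1 + X ^ D * t)
    (hb : ∃ t, b = 1 + X ^ D * t) : ∃ t, a * b = 1 + X ^ D * t := by
  obtain ⟨u, rfl⟩ := ha; obtain ⟨v, rfl⟩ := hb
  exact ⟨u + v + X ^ D * (u * v), by ring⟩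

lemma pred_pow {D : ℕ} {a : Polynomial K} (ha : ∃ t, a = 1 + X ^ D * t) (n : ℕ) :
    ∃ t, a ^ n = 1 + X ^ D * t := by
  induction n with
  | zero => exact ⟨0, by simp⟩
  | succ n ih => rw [pow_succ]; exact pred_mul ih ha

lemma coeff_prod_pow_congr (p : ℕ) [Fact p.Prime] [CharP K p] (s k : ℕ)
    (hk : k < p ^ s) {ι : Type*} (T : Finset ι) (c : ι → K) (b b' : ι → ℕ)
    (h : ∀ i ∈ T, b i % p ^ s = b' i % p ^ s) :
    (∏ i ∈ T, (1 + C (c i) * X) ^ (b i)).coeff k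
      = (∏ i ∈ T, (1 + C (c i) * X) ^ (b' i)).coeff k := by
  set D := p ^ s with hDdef
  have key : ∀ bb : ι → ℕ,
      (∏ i ∈ T, (1 + C (c i) * X) ^ (bb i)).coeff k
        = (∏ i ∈ T, (1 + C (c i) * X) ^ (bb i % D)).coeff k := by
    intro bb
    have split : ∀ i ∈ T, (1 + C (c i) * X) ^ (bb i)
        = (1 + C (c i) * X) ^ (bb i % D) * ((1 + C (c i) * X) ^ D) ^ (bb i / D) := by
      intro i _
      rw [← pow_mul, ← pow_add]
      congr 1
      exact (Nat.mod_add_div _ _).symm ▸ (Nat.mod_add_div (bb i) D)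
    rw [Finset.prod_congr rfl split, Finset.prod_mul_distrib]
    refine coeff_mul_one_add_Xpow hk _ _ ?_
    refine Finset.prod_induction _ (fun P => ∃ t, P = 1 + X ^ D * t)
      (fun _ _ => pred_mul) ⟨0, by simp⟩ (fun i _ => ?_)
    refine pred_pow ?_ _
    have hfrob : (1 + C (c i) * X) ^ D = 1 + (C (c i) * X) ^ D := by
      rw [hDdef, add_pow_char_pow]
      simp
    refine ⟨C (c i ^ D), ?_⟩
    rw [hfrob, mul_pow, ← Polynomial.C_pow, mul_comm (C (c i ^ D))]
  rw [key b, key b', Finset.prod_congr rfl (fun i hi => by rw [h i hi])]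

end CoeffCongr

/-- The sequence `(S_{F_q}(e_{n,k}))_{n ≥ 1}` satisfies the linear recurrence with integer
coefficients whose characteristic polynomial is
`χ_{q,k}(X) = lcm (M_{a_1,…,a_{q-1}}(X))_{0 ≤ a_{q-1} ≤ ⋯ ≤ a_1 ≤ D-1}`, where
`M_{a_1,…,a_{q-1}}` is the minimal polynomial over `ℚ` of `1 + ξ_D^{a_1} + ⋯ + ξ_D^{a_{q-1}}`
and `ξ_D = exp(2πi/D)`, `D = p^{⌊log_p k⌋+1}`. -/
theorem stmt16 (p : ℕ) [Fact p.Prime] (r : ℕ) (hr : 1 ≤ r) (k : ℕ) (hk : 1 < k)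
    (D : ℕ) (hD : D = p ^ (Nat.log p k + 1))
    (K : Type*) [Field K] [Fintype K] [Algebra (ZMod p) K]
    (hcard : Fintype.card K = p ^ r)
    (ξD : ℂ) (hξD : ξD = Complex.exp (2 * (Real.pi : ℂ) * Complex.I / D))
    (Sq : ℕ → ℂ)
    (hSq : ∀ n, Sq n = ∑ x : Fin n → K,
      Complex.exp (2 * (Real.pi : ℂ) * Complex.I / p *
        ((Algebra.trace (ZMod p) K (esymmVal n k x)).val : ℂ)))
    (A : Finset (Fin (p ^ r - 1) → ℕ))
    (hA : A = (Fintype.piFinset fun _ : Fin (p ^ r - 1) => Finset.range D).filter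
      (fun a => ∀ i i' : Fin (p ^ r - 1), i ≤ i' → a i' ≤ a i))
    (χ : Polynomial ℚ)
    (hχ : χ = A.lcm fun a => minpoly ℚ ((1 + ∑ i : Fin (p ^ r - 1), ξD ^ (a i) : ℂ)))
    (d : ℕ) (hd : d = χ.natDegree) :
    (∀ i, ∃ z : ℤ, χ.coeff i = (z : ℚ)) ∧
      ∀ n : ℕ, 1 ≤ n →
        Sq (n + d) = ∑ m ∈ Finset.range d, (-(χ.coeff m : ℂ)) * Sq (n + m) := by
  classical
  have hp1 : 1 < p := (Fact.out : p.Prime).one_lt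
  have hD1 : 1 < D := by
    rw [hD]; exact Nat.one_lt_pow (Nat.succ_ne_zero _) hp1
  haveI : NeZero D := ⟨by omega⟩
  have hkD : k < D := by rw [hD]; exact Nat.lt_pow_succ_log_self hp1 k
  haveI : CharP K p := charP_of_injective_algebraMap (algebraMap (ZMod p) K).injective p
  have hprim : IsPrimitiveRoot ξD D := by
    rw [hξD]; exact Complex.isPrimitiveRoot_exp D (by omega)
  have hξpow : ξD ^ D = 1 := hprim.pow_eq_one
  have cardS : Fintype.card {c : K // c ≠ 0} = p ^ r - 1 := by
    have h1 : Fintype.card {c : K // c ≠ 0} = Fintype.card K - 1 := by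
      rw [Fintype.card_subtype_compl (p := fun c : K => c = 0), Fintype.card_subtype_eq (0 : K)]
    rw [h1, hcard]
  set e : Fin (p ^ r - 1) ≃ {c : K // c ≠ 0} := (Fintype.equivFinOfCardEq cardS).symm with he
  set ψ : K → ℂ := fun v => Complex.exp (2 * (Real.pi : ℂ) * Complex.I / p *
      ((Algebra.trace (ZMod p) K v).val : ℂ)) with hψ
  set E : ({c : K // c ≠ 0} → ℕ) → K := fun b =>
      (∏ c : {c : K // c ≠ 0}, (1 + Polynomial.C (c : K) * Polynomial.X) ^ (b c)).coeff k with hE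
  set G : ({c : K // c ≠ 0} → ZMod D) → ℂ := fun b => ψ (E fun c => (b c).val) with hG
  set gh : ({c : K // c ≠ 0} → ZMod D) → ℂ := fun t =>
      (((D : ℂ) ^ Fintype.card {c : K // c ≠ 0})⁻¹ *
        ∑ b : {c : K // c ≠ 0} → ZMod D, G b * ∏ c, ξD ^ (-(t c * b c)).val) with hgh
  set lam : ({c : K // c ≠ 0} → ZMod D) → ℂ := fun t =>
      1 + ∑ c : {c : K // c ≠ 0}, ξD ^ (t c).val with hlam
  -- step (a): esymm as coefficient of fiberwise product
  have La : ∀ n (x : Fin n → K), esymmVal n k x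
      = E (fun c => (Finset.univ.filter fun i => x i = (c : K)).card) := by
    intro n x
    have h1 : esymmVal n k x = (∏ i, (1 + C (x i) * X)).coeff k := by
      rw [coeff_prod_one_add Finset.univ x k]
      rfl
    have h2 : (∏ i, (1 + C (x i) * X))
        = ∏ c : K, (1 + C c * X) ^ (Finset.univ.filter fun i => x i = c).card :=
      prod_comp_count x (fun c => 1 + C c * X)
    have h3 : (∏ c : K, (1 + C c * X) ^ (Finset.univ.filter fun i => x i = c).card)
        = ∏ c ∈ Finset.univ.erase (0 : K),
            (1 + C c * X) ^ (Finset.univ.filter fun i => x i = c).card := by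
      rw [← Finset.mul_prod_erase Finset.univ _ (Finset.mem_univ (0 : K))]
      simp
    have h4 : (∏ c ∈ Finset.univ.erase (0 : K),
          (1 + C c * X) ^ (Finset.univ.filter fun i => x i = c).card)
        = ∏ c : {c : K // c ≠ 0},
            (1 + C (c : K) * X) ^ (Finset.univ.filter fun i => x i = (c : K)).card := by
      exact Finset.prod_subtype (Finset.univ.erase (0 : K))
        (fun c => by simp [Finset.mem_erase]) _
    rw [h1, h2, h3, h4, hE]
  -- step (b): reduction mod D in the exponents
  have Lb : ∀ b b' : {c : K // c ≠ 0} → ℕ, (∀ c, b c % D = b' c % D) → E b = E b' := by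
    intro b b' hbb
    rw [hE]
    exact coeff_prod_pow_congr p (Nat.log p k + 1) k (hD ▸ hkD) Finset.univ _ b b'
      (fun c _ => by rw [← hD]; exact hbb c)
  -- combined: the summand is G of the count vector mod D
  have Lc : ∀ n (x : Fin n → K),
      ψ (esymmVal n k x)
        = G (fun c => (((Finset.univ.filter fun i => x i = (c : K)).card : ZMod D))) := by
    intro n x
    rw [hG]
    congr 1
    rw [La n x]
    refine Lb _ _ fun c => ?_
    rw [ZMod.val_natCast, Nat.mod_mod_of_dvd _ dvd_rfl]
  -- eigenvalue expansion
  have L2 : ∀ n : ℕ, Sq n = ∑ t : {c : K // c ≠ 0} → ZMod D, gh t * lam t ^ n := by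
    intro n
    rw [hSq n]
    have step1 : ∀ x : Fin n → K, Complex.exp (2 * (Real.pi : ℂ) * Complex.I / p *
          ((Algebra.trace (ZMod p) K (esymmVal n k x)).val : ℂ))
        = G (fun c => (((Finset.univ.filter fun i => x i = (c : K)).card : ZMod D))) := by
      intro x
      rw [← Lc n x, hψ]
    rw [Finset.sum_congr rfl (fun x _ => step1 x)]
    rw [Finset.sum_congr rfl (fun x _ => fourier_inversion ξD hprim G
      (fun c => (((Finset.univ.filter fun i => x i = (c : K)).card : ZMod D))))]
    rw [Finset.sum_comm]
    refine Finset.sum_congr rfl fun t _ => ?_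
    rw [← Finset.mul_sum]
    congr 1
    · -- ∑_x ∏_c ξ^{(t c * cnt).val} = lam t ^ n
      set w : K → ℂ := fun y => if h : y = (0 : K) then (1 : ℂ) else ξD ^ (t ⟨y, h⟩).val with hw
      have hζD : ∀ c : {c : K // c ≠ 0}, (ξD ^ (t c).val) ^ D = 1 := by
        intro c
        rw [← pow_mul, mul_comm, pow_mul, hξpow, one_pow]
      have hcx : ∀ x : Fin n → K,
          (∏ c : {c : K // c ≠ 0},
            ξD ^ (t c * (((Finset.univ.filter fun i => x i = (c : K)).card : ZMod D))).val)
          = ∏ i, w (x i) := by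
        intro x
        have hfac : ∀ c : {c : K // c ≠ 0},
            ξD ^ (t c * (((Finset.univ.filter fun i => x i = (c : K)).card : ZMod D))).val
              = (ξD ^ (t c).val) ^ ((Finset.univ.filter fun i => x i = (c : K)).card) := by
          intro c
          rw [mul_comm (t c), pow_val_mul ξD hξpow, ZMod.val_natCast, pow_mod_eq _ (hζD c)]
        rw [Finset.prod_congr rfl (fun c _ => hfac c), prod_comp_count x w]
        have h5 : (∏ c : K, w c ^ (Finset.univ.filter fun i => x i = c).card)
            = ∏ c ∈ Finset.univ.erase (0 : K),
                w c ^ (Finset.univ.filter fun i => x i = c).card := by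
          rw [← Finset.mul_prod_erase Finset.univ _ (Finset.mem_univ (0 : K))]
          rw [hw]
          simp
        have h6 : (∏ c ∈ Finset.univ.erase (0 : K),
              w c ^ (Finset.univ.filter fun i => x i = c).card)
            = ∏ c : {c : K // c ≠ 0},
                w (c : K) ^ (Finset.univ.filter fun i => x i = (c : K)).card :=
          Finset.prod_subtype (Finset.univ.erase (0 : K))
            (fun c => by simp [Finset.mem_erase]) _
        rw [h5, h6]
        refine Finset.prod_congr rfl fun c _ => ?_
        congr 1
        rw [hw]
        simp only []
        rw [dif_neg c.2]
      rw [Finset.sum_congr rfl (fun x _ => hcx x)]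
      have h7 : lam t = ∑ y : K, w y := by
        rw [hlam]
        simp only []
        rw [← Finset.add_sum_erase Finset.univ w (Finset.mem_univ (0 : K))]
        congr 1
        · rw [hw]; simp
        · have h8 : (∑ c ∈ Finset.univ.erase (0 : K), w c)
              = ∑ c : {c : K // c ≠ 0}, w (c : K) :=
            Finset.sum_subtype (Finset.univ.erase (0 : K))
              (fun c => by simp [Finset.mem_erase]) w
          rw [h8]
          refine Finset.sum_congr rfl fun c _ => ?_
          rw [hw]
          simp only []
          rw [dif_neg c.2]
      rw [h7, Fintype.sum_pow w n]
  -- sorting: every lam t is one of the algebraic numbers indexed by A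
  have L3 : ∀ t : {c : K // c ≠ 0} → ZMod D,
      ∃ a ∈ A, (1 + ∑ i : Fin (p ^ r - 1), ξD ^ (a i) : ℂ) = lam t := by
    intro t
    set v : Fin (p ^ r - 1) → ℕ := fun i => (t (e i)).val with hv
    set σ := Tuple.sort v with hσ
    refine ⟨fun i => v (σ (Fin.rev i)), ?_, ?_⟩
    · rw [hA, Finset.mem_filter]
      constructor
      · rw [Fintype.mem_piFinset]
        intro i
        exact Finset.mem_range.2 (ZMod.val_lt _)
      · intro i i' hii
        exact Tuple.monotone_sort v (Fin.rev_le_rev.2 hii)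
    · rw [hlam]
      simp only []
      congr 1
      have step : (∑ i, ξD ^ (v (σ (Fin.rev i)))) = ∑ j, ξD ^ (v j) :=
        Fintype.sum_equiv (Fin.revPerm.trans σ) _ _ fun i => rfl
      rw [step]
      exact Fintype.sum_equiv e _ _ fun i => rfl
  -- integrality of the numbers
  have hIntZ : ∀ a : Fin (p ^ r - 1) → ℕ,
      IsIntegral ℤ ((1 + ∑ i : Fin (p ^ r - 1), ξD ^ (a i) : ℂ)) := by
    intro a
    have hξint : IsIntegral ℤ ξD := hprim.isIntegral (by omega)
    exact isIntegral_one.add (IsIntegral.sum _ fun i _ => hξint.pow _)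
  have hne : ∀ a ∈ A, minpoly ℚ ((1 + ∑ i : Fin (p ^ r - 1), ξD ^ (a i) : ℂ)) ≠ 0 := by
    intro a _
    exact minpoly.ne_zero ((hIntZ a).tower_top)
  have hχ0 : χ ≠ 0 := by
    rw [hχ]
    intro h0
    obtain ⟨a, haA, ha0⟩ := Finset.lcm_eq_zero_iff.1 h0
    exact hne a (Finset.mem_coe.1 haA) (by simpa using ha0)
  have hmonic : χ.Monic := by
    have hnorm : normalize χ = χ := by rw [hχ]; exact Finset.normalize_lcm
    have h := Polynomial.monic_normalize hχ0
    rwa [hnorm] at h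
  -- every lam t is a root of χ
  have hroot : ∀ t : {c : K // c ≠ 0} → ZMod D, Polynomial.aeval (lam t) χ = 0 := by
    intro t
    obtain ⟨a, ha, hval⟩ := L3 t
    have hdvd : minpoly ℚ ((1 + ∑ i : Fin (p ^ r - 1), ξD ^ (a i) : ℂ)) ∣ χ :=
      hχ ▸ Finset.dvd_lcm ha
    obtain ⟨u, hu⟩ := hdvd
    rw [hu, map_mul, ← hval, minpoly.aeval, zero_mul]
  constructor
  · -- integer coefficients
    have hP0 : (∏ a ∈ A, minpoly ℤ ((1 + ∑ i : Fin (p ^ r - 1), ξD ^ (a i) : ℂ))).Monic :=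
      Polynomial.monic_prod_of_monic _ _ fun a _ => minpoly.monic (hIntZ a)
    have hdvd : χ ∣ (∏ a ∈ A, minpoly ℤ ((1 + ∑ i : Fin (p ^ r - 1), ξD ^ (a i) : ℂ))).map
        (algebraMap ℤ ℚ) := by
      rw [hχ]
      refine Finset.lcm_dvd fun a ha => ?_
      rw [minpoly.isIntegrallyClosed_eq_field_fractions' ℚ (hIntZ a)]
      exact Polynomial.map_dvd _ (Finset.dvd_prod_of_mem _ ha)
    obtain ⟨g', hg'⟩ := IsIntegrallyClosed.eq_map_mul_C_of_dvd (K := ℚ) hP0 hdvd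
    intro i
    refine ⟨g'.coeff i, ?_⟩
    have hχeq : χ = g'.map (algebraMap ℤ ℚ) := by
      rw [← hg', hmonic.leadingCoeff, map_one, mul_one]
    rw [hχeq, Polynomial.coeff_map]
    simp
  · -- the recurrence
    intro n _
    have hper : ∀ t : {c : K // c ≠ 0} → ZMod D,
        lam t ^ (n + d) = ∑ m ∈ Finset.range d, (-(χ.coeff m : ℂ)) * lam t ^ (n + m) := by
      intro t
      have h0 := hroot t
      rw [Polynomial.aeval_eq_sum_range, ← hd, Finset.sum_range_succ] at h0
      have hcd : χ.coeff d = 1 := by rw [hd]; exact hmonic.coeff_natDegree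
      rw [hcd, one_smul] at h0
      have hlamd : lam t ^ d = ∑ m ∈ Finset.range d, (-(χ.coeff m : ℂ)) * lam t ^ m := by
        have h1 : lam t ^ d = -∑ m ∈ Finset.range d, χ.coeff m • lam t ^ m :=
          eq_neg_of_add_eq_zero_right h0
        rw [h1, ← Finset.sum_neg_distrib]
        refine Finset.sum_congr rfl fun m _ => ?_
        rw [Rat.smul_def]
        ring
      rw [pow_add, hlamd, Finset.mul_sum]
      refine Finset.sum_congr rfl fun m _ => ?_
      rw [pow_add]
      ring
    rw [L2 (n + d), Finset.sum_congr rfl fun t _ => by rw [hper t]]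
    rw [Finset.sum_congr rfl fun t _ => Finset.mul_sum _ _ _]
    rw [Finset.sum_comm]
    refine Finset.sum_congr rfl fun m _ => ?_
    rw [L2 (n + m), Finset.mul_sum]
    refine Finset.sum_congr rfl fun t _ => ?_
    ring
end
end
end

section
/- Let m be a positive integer, π(m) the Pisano period modulo m (the period of the Fibonacci sequence reduced modulo m), f_n^{(m)} = f_n mod m where f_n is the n-th Fibonacci number, and ξ_{π(m)} = exp(2πi/π(m)). Define S_m(n) = Σ_{q=0}^{n} C(n,q) · ξ_{π(m)}^{f_q^{(m)}}. Then S_m(n) = Σ_{j=0}^{π(m)−1} ((1/π(m)) Σ_{t=0}^{π(m)−1} ξ_{π(m)}^{f_t^{(m)} + tj}) · (1 + ξ_{π(m)}^{−j})^n, and the sequence (S_m(n)) satisfies the linear recurrence with integer coefficients whose characteristic polynomial is P_{S_m}(X) = Π_{a=0}^{π(m)−1} (X − (1 + ξ_{π(m)}^{a})). -/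
noncomputable section

open Polynomial

private lemma aux_orth {ζ : ℂ} {N : ℕ} (hN : 0 < N) (hprim : IsPrimitiveRoot ζ N) (k : ℤ) :
    ∑ j ∈ Finset.range N, ζ ^ (k * j) = if (N : ℤ) ∣ k then (N : ℂ) else 0 := by
  by_cases hd : (N : ℤ) ∣ k
  · have h1 : ∀ j ∈ Finset.range N, ζ ^ (k * (j : ℤ)) = 1 := by
      intro j _
      rw [hprim.zpow_eq_one_iff_dvd]
      exact hd.mul_right _
    rw [Finset.sum_congr rfl h1, if_pos hd]
    simp
  · have hne : ζ ^ k ≠ 1 := fun h => hd ((hprim.zpow_eq_one_iff_dvd k).mp h)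
    have h2 : ∀ j ∈ Finset.range N, ζ ^ (k * (j : ℤ)) = (ζ ^ k) ^ j := by
      intro j _; rw [zpow_mul, zpow_natCast]
    rw [Finset.sum_congr rfl h2, if_neg hd]
    have hpow : (ζ ^ k) ^ N = 1 := by
      rw [← zpow_natCast (ζ ^ k), ← zpow_mul, mul_comm, zpow_mul, zpow_natCast,
        hprim.pow_eq_one, one_zpow]
    have hgs := geom_sum_mul (ζ ^ k) N
    rw [hpow, sub_self] at hgs
    exact (mul_eq_zero.mp hgs).resolve_right (sub_ne_zero.mpr hne)

private lemma aux_fib (m pis : ℕ)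
    (hper : ∀ n : ℕ, Nat.fib (n + pis) % m = Nat.fib n % m) :
    ∀ q : ℕ, Nat.fib q % m = Nat.fib (q % pis) % m := by
  intro q
  by_cases h : pis = 0
  · simp [h]
  conv_lhs => rw [← Nat.mod_add_div q pis]
  generalize q / pis = c
  induction c with
  | zero => simp
  | succ c ih => rw [Nat.mul_succ, ← Nat.add_assoc, hper, ih]

/-- Closed formula and recurrence for `S_m(n) = ∑_{q=0}^n C(n,q) ξ_{π(m)}^{f_q mod m}`, where
`π(m)` is the Pisano period mod `m` (the period of the Fibonacci sequence mod `m`) and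
`ξ_{π(m)} = exp(2πi/π(m))`:
`S_m(n) = ∑_{j=0}^{π(m)-1} ((1/π(m)) ∑_{t=0}^{π(m)-1} ξ_{π(m)}^{f_t mod m + tj})
(1 + ξ_{π(m)}^{-j})^n`, and `(S_m(n))` satisfies the linear recurrence with integer
coefficients whose characteristic polynomial is
`P_{S_m}(X) = ∏_{a=0}^{π(m)-1} (X - (1 + ξ_{π(m)}^a))`. -/
theorem stmt18 (m : ℕ) (hm : 0 < m)
    (pis : ℕ) (hpis : 0 < pis)
    (hper : ∀ n : ℕ, Nat.fib (n + pis) % m = Nat.fib n % m)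
    (hmin : ∀ pis' : ℕ, 0 < pis' →
      (∀ n : ℕ, Nat.fib (n + pis') % m = Nat.fib n % m) → pis ≤ pis')
    (ξ : ℂ) (hξ : ξ = Complex.exp (2 * (Real.pi : ℂ) * Complex.I / pis))
    (S : ℕ → ℂ)
    (hS : ∀ n, S n = ∑ q ∈ Finset.range (n + 1),
      (n.choose q : ℂ) * ξ ^ (Nat.fib q % m))
    (P : Polynomial ℂ)
    (hP : P = ∏ a ∈ Finset.range pis, (X - C (1 + ξ ^ a))) :
    (∀ n, S n = ∑ j ∈ Finset.range pis,
        ((1 / pis) * ∑ t ∈ Finset.range pis, ξ ^ (Nat.fib t % m + t * j)) *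
          (1 + ξ ^ (-(j : ℤ))) ^ n) ∧
      (∀ i, ∃ z : ℤ, P.coeff i = (z : ℂ)) ∧
      ∀ n : ℕ, S (n + pis) = ∑ a ∈ Finset.range pis, (-(P.coeff a)) * S (n + a) := by
  have hpn : (pis : ℂ) ≠ 0 := Nat.cast_ne_zero.mpr hpis.ne'
  have hprim : IsPrimitiveRoot ξ pis := hξ ▸ Complex.isPrimitiveRoot_exp pis hpis.ne'
  have hξ1 : ξ ^ pis = 1 := hprim.pow_eq_one
  have hz : ξ ≠ 0 := hprim.ne_zero hpis.ne'
  -- key Fourier identity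
  have hkey : ∀ q : ℕ,
      (∑ j ∈ Finset.range pis,
        ((1 / (pis : ℂ)) * ∑ t ∈ Finset.range pis, ξ ^ (Nat.fib t % m + t * j)) *
          (ξ ^ (-(j : ℤ))) ^ q) = ξ ^ (Nat.fib q % m) := by
    intro q
    have hterm : ∀ t j : ℕ,
        ξ ^ (Nat.fib t % m + t * j) * (ξ ^ (-(j : ℤ))) ^ q
          = ξ ^ (((Nat.fib t % m : ℕ)) : ℤ) * ξ ^ (((t : ℤ) - q) * j) := by
      intro t j
      rw [← zpow_natCast ξ (Nat.fib t % m + t * j), ← zpow_natCast (ξ ^ (-(j : ℤ))) q,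
        ← zpow_mul, ← zpow_add₀ hz, ← zpow_add₀ hz]
      congr 1
      push_cast
      ring
    have hmem : q % pis ∈ Finset.range pis := Finset.mem_range.mpr (Nat.mod_lt q hpis)
    calc (∑ j ∈ Finset.range pis,
          ((1 / (pis : ℂ)) * ∑ t ∈ Finset.range pis, ξ ^ (Nat.fib t % m + t * j)) *
            (ξ ^ (-(j : ℤ))) ^ q)
        = (1 / (pis : ℂ)) * ∑ j ∈ Finset.range pis, ∑ t ∈ Finset.range pis,
            ξ ^ (((Nat.fib t % m : ℕ)) : ℤ) * ξ ^ (((t : ℤ) - q) * j) := by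
          rw [Finset.mul_sum]
          refine Finset.sum_congr rfl fun j _ => ?_
          rw [mul_assoc, Finset.sum_mul]
          exact congrArg _ (Finset.sum_congr rfl fun t _ => hterm t j)
      _ = (1 / (pis : ℂ)) * ∑ t ∈ Finset.range pis,
            ξ ^ (((Nat.fib t % m : ℕ)) : ℤ) * ∑ j ∈ Finset.range pis, ξ ^ (((t : ℤ) - q) * j) := by
          rw [Finset.sum_comm]
          congr 1
          exact Finset.sum_congr rfl fun t _ => (Finset.mul_sum _ _ _).symm
      _ = (1 / (pis : ℂ)) * ∑ t ∈ Finset.range pis,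
            ξ ^ (((Nat.fib t % m : ℕ)) : ℤ) * (if t = q % pis then (pis : ℂ) else 0) := by
          congr 1
          refine Finset.sum_congr rfl fun t ht => ?_
          rw [aux_orth hpis hprim]
          have ht' : t < pis := Finset.mem_range.mp ht
          have hiff : ((pis : ℤ) ∣ (t : ℤ) - q) ↔ (t = q % pis) := by
            rw [← Int.modEq_iff_dvd, Int.ModEq, ← Int.natCast_mod, ← Int.natCast_mod t pis,
              Nat.cast_inj, Nat.mod_eq_of_lt ht']
            omega
          simp only [hiff]
      _ = ξ ^ (Nat.fib q % m) := by
          simp only [mul_ite, mul_zero, Finset.sum_ite_eq', hmem, if_true]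
          rw [← aux_fib m pis hper q, zpow_natCast]
          field_simp
  -- binomial expansion
  have hx : ∀ (j : ℕ) (n : ℕ), (1 + ξ ^ (-(j : ℤ))) ^ n
      = ∑ q ∈ Finset.range (n + 1), (n.choose q : ℂ) * (ξ ^ (-(j : ℤ))) ^ q := by
    intro j n
    rw [add_comm, add_pow]
    exact Finset.sum_congr rfl fun q _ => by rw [one_pow, mul_one, mul_comm]
  -- Part 1
  have hform : ∀ n, S n = ∑ j ∈ Finset.range pis,
      ((1 / (pis : ℂ)) * ∑ t ∈ Finset.range pis, ξ ^ (Nat.fib t % m + t * j)) *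
        (1 + ξ ^ (-(j : ℤ))) ^ n := by
    intro n
    calc S n = ∑ q ∈ Finset.range (n + 1), (n.choose q : ℂ) * ξ ^ (Nat.fib q % m) := hS n
      _ = ∑ q ∈ Finset.range (n + 1), ∑ j ∈ Finset.range pis, (n.choose q : ℂ) *
            (((1 / (pis : ℂ)) * ∑ t ∈ Finset.range pis, ξ ^ (Nat.fib t % m + t * j)) *
              (ξ ^ (-(j : ℤ))) ^ q) := by
          refine Finset.sum_congr rfl fun q _ => ?_
          rw [← hkey q, Finset.mul_sum]
      _ = ∑ j ∈ Finset.range pis, ∑ q ∈ Finset.range (n + 1), (n.choose q : ℂ) *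
            (((1 / (pis : ℂ)) * ∑ t ∈ Finset.range pis, ξ ^ (Nat.fib t % m + t * j)) *
              (ξ ^ (-(j : ℤ))) ^ q) := Finset.sum_comm
      _ = ∑ j ∈ Finset.range pis,
            ((1 / (pis : ℂ)) * ∑ t ∈ Finset.range pis, ξ ^ (Nat.fib t % m + t * j)) *
              (1 + ξ ^ (-(j : ℤ))) ^ n := by
          refine Finset.sum_congr rfl fun j _ => ?_
          rw [hx j n]
          conv_rhs => rw [Finset.mul_sum]
          refine Finset.sum_congr rfl fun q _ => ?_
          ring
  -- polynomial form
  have hprod : ∏ a ∈ Finset.range pis, (X - C (ξ ^ a)) = X ^ pis - 1 := by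
    have himg : (Finset.range pis).image (fun a => ξ ^ a) = Polynomial.nthRootsFinset pis (1 : ℂ) := by
      apply Finset.eq_of_subset_of_card_le
      · intro w hw
        simp only [Finset.mem_image] at hw
        obtain ⟨a, _, rfl⟩ := hw
        refine (Polynomial.mem_nthRootsFinset hpis (1 : ℂ)).mpr ?_
        rw [← pow_mul, mul_comm, pow_mul, hξ1, one_pow]
      · rw [hprim.card_nthRootsFinset, Finset.card_image_of_injOn, Finset.card_range]
        intro a ha b hb hab
        exact hprim.pow_inj (Finset.mem_range.mp ha) (Finset.mem_range.mp hb) hab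
    have hinj : Set.InjOn (fun a => ξ ^ a) (Finset.range pis) := by
      intro a ha b hb hab
      exact hprim.pow_inj (Finset.mem_range.mp (by simpa using ha))
        (Finset.mem_range.mp (by simpa using hb)) hab
    rw [X_pow_sub_one_eq_prod hpis hprim, ← himg, Finset.prod_image hinj]
  have hPform : P = (X - 1) ^ pis - 1 := by
    have hc : P = (∏ a ∈ Finset.range pis, (X - C (ξ ^ a))).comp (X - 1) := by
      rw [hP, Polynomial.prod_comp]
      refine Finset.prod_congr rfl fun a _ => ?_
      simp only [sub_comp, X_comp, C_comp, map_add, map_one]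
      ring
    rw [hc, hprod, sub_comp, pow_comp, X_comp, one_comp]
  -- degree and monicity
  have hmonic : P.Monic := by
    rw [hP]; exact monic_prod_of_monic _ _ fun a _ => monic_X_sub_C _
  have hdeg : P.natDegree = pis := by
    rw [hP, Polynomial.natDegree_prod_of_monic _ _ fun a _ => monic_X_sub_C _]
    simp only [Polynomial.natDegree_X_sub_C]
    simp
  -- roots give recurrence
  have hroot : ∀ j : ℕ, ((1 : ℂ) + ξ ^ (-(j : ℤ))) ^ pis
      = ∑ a ∈ Finset.range pis, (-(P.coeff a)) * (1 + ξ ^ (-(j : ℤ))) ^ a := by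
    intro j
    have heval : P.eval (1 + ξ ^ (-(j : ℤ))) = 0 := by
      rw [hPform]
      simp only [eval_sub, eval_pow, eval_one, eval_X]
      have h1 : (1 : ℂ) + ξ ^ (-(j : ℤ)) - 1 = ξ ^ (-(j : ℤ)) := by ring
      rw [h1, ← zpow_natCast (ξ ^ (-(j : ℤ))), ← zpow_mul, mul_comm, zpow_mul,
        zpow_natCast, hξ1, one_zpow, sub_self]
    have h0 := heval
    rw [eval_eq_sum_range, hdeg, Finset.sum_range_succ] at h0
    have hcp : P.coeff pis = 1 := by
      have := hmonic.coeff_natDegree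
      rwa [hdeg] at this
    rw [hcp, one_mul] at h0
    have h1 : (1 + ξ ^ (-(j : ℤ))) ^ pis
        = -∑ a ∈ Finset.range pis, P.coeff a * (1 + ξ ^ (-(j : ℤ))) ^ a := by
      linear_combination h0
    rw [h1, ← Finset.sum_neg_distrib]
    refine Finset.sum_congr rfl fun a _ => ?_
    ring
  refine ⟨hform, ?_, ?_⟩
  · intro i
    refine ⟨(-1) ^ (pis - i) * (pis.choose i) - (if i = 0 then 1 else 0), ?_⟩
    have h1 : ((X : ℂ[X]) - 1) = X + C (-1) := by
      rw [map_neg, map_one]; ring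
    rw [hPform, coeff_sub, h1, coeff_X_add_C_pow, Polynomial.coeff_one]
    push_cast
    split_ifs <;> ring
  · intro n
    have hform' : ∀ k, S k = ∑ j ∈ Finset.range pis,
        ((1 / (pis : ℂ)) * ∑ t ∈ Finset.range pis, ξ ^ (Nat.fib t % m + t * j)) *
          (1 + ξ ^ (-(j : ℤ))) ^ k := hform
    calc S (n + pis)
        = ∑ j ∈ Finset.range pis,
            ((1 / (pis : ℂ)) * ∑ t ∈ Finset.range pis, ξ ^ (Nat.fib t % m + t * j)) *
              (1 + ξ ^ (-(j : ℤ))) ^ (n + pis) := hform' _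
      _ = ∑ j ∈ Finset.range pis, ∑ a ∈ Finset.range pis, (-(P.coeff a)) *
            (((1 / (pis : ℂ)) * ∑ t ∈ Finset.range pis, ξ ^ (Nat.fib t % m + t * j)) *
              (1 + ξ ^ (-(j : ℤ))) ^ (n + a)) := by
          refine Finset.sum_congr rfl fun j _ => ?_
          rw [pow_add, hroot j]
          simp only [Finset.mul_sum]
          refine Finset.sum_congr rfl fun a _ => ?_
          rw [pow_add]
          ring
      _ = ∑ a ∈ Finset.range pis, (-(P.coeff a)) * S (n + a) := by
          rw [Finset.sum_comm]
          refine Finset.sum_congr rfl fun a _ => ?_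
          rw [← Finset.mul_sum, ← hform' (n + a)]
end
end

section
/- For the sequence S(n) = S_{F_4}(e_{n,3}) of exponential sums of the elementary symmetric polynomial of degree 3 over the field F_4 with four elements, one has for all n ≥ 1: S_{F_4}(e_{n,3}) = 4^{n−1} + 3·2^{n−1} − (3/4)(2i)^n − (3/4)(−2i)^n = 4^{n−1} + 3·2^{n−1} − 3·2^{n−1}·cos(nπ/2). In particular, the sequence satisfies the minimal linear recurrence with integer coefficients whose characteristic polynomial is μ(X) = (X−4)(X−2)(X^2+4). -/
noncomputable section

open Polynomial

set_option linter.unusedSectionVars false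
set_option linter.unusedVariables false
set_option maxHeartbeats 1000000

open scoped Classical

namespace Stmt19Aux

def st : ℕ → Fin 5 → ℂ
  | 0 => ![1, 0, 0, 0, 0]
  | (n+1) => ![st n 0 + 3 * st n 3,
               st n 1 + st n 2 - 2 * st n 4,
               st n 0 + st n 2 - 2 * st n 4,
               st n 1 + 2 * st n 2 + st n 3,
               -(st n 1) - st n 3 + 2 * st n 4]

lemma st_s0 (n : ℕ) : st (n+1) 0 = st n 0 + 3 * st n 3 := by simp [st]
lemma st_s1 (n : ℕ) : st (n+1) 1 = st n 1 + st n 2 - 2 * st n 4 := by simp [st]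
lemma st_s2 (n : ℕ) : st (n+1) 2 = st n 0 + st n 2 - 2 * st n 4 := by simp [st]
lemma st_s3 (n : ℕ) : st (n+1) 3 = st n 1 + 2 * st n 2 + st n 3 := by simp [st]
lemma st_s4 (n : ℕ) : st (n+1) 4 = -(st n 1) - st n 3 + 2 * st n 4 := by simp [st]

local notation "I" => Complex.I

lemma st_closed (n : ℕ) :
    st n 0 = (4^n + 6*2^n + 3*(2*I)^n + 3*(-2*I)^n + 3*(0:ℂ)^n) / 16 ∧
    st n 1 = (4^n - 2*2^n - (2*I)^n - (-2*I)^n + 3*(0:ℂ)^n) / 16 ∧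
    st n 2 = (4^n + 2*2^n - (1+2*I)*(2*I)^n - (1-2*I)*(-2*I)^n - (0:ℂ)^n) / 16 ∧
    st n 3 = (4^n + 2*2^n - (1-2*I)*(2*I)^n - (1+2*I)*(-2*I)^n - (0:ℂ)^n) / 16 ∧
    st n 4 = (-(4:ℂ)^n + 2*2^n - (2*I)^n - (-2*I)^n + (0:ℂ)^n) / 16 := by
  induction n with
  | zero =>
    refine ⟨by norm_num [st], by norm_num [st], ?_, ?_, by norm_num [st]; rfl⟩ <;>
      · show (0:ℂ) = _
        norm_num [st]
        ring
  | succ n ih =>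
    obtain ⟨h0, h1, h2, h3, h4⟩ := ih
    refine ⟨?_, ?_, ?_, ?_, ?_⟩
    · rw [st_s0, h0, h3]; ring
    · rw [st_s1, h1, h2, h4]; ring
    · rw [st_s2, h0, h2, h4]
      linear_combination ((1/4) * ((2*I)^n + (-2*I)^n)) * Complex.I_sq
    · rw [st_s3, h1, h2, h3]
      linear_combination (-(1/4) * ((2*I)^n + (-2*I)^n)) * Complex.I_sq
    · rw [st_s4, h1, h3, h4]; ring

variable {K : Type*} [Field K] [Fintype K] [Algebra (ZMod 2) K]

lemma char2' : (2 : K) = 0 := by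
  have h := charP_of_injective_ringHom (algebraMap (ZMod 2) K).injective 2
  exact CharP.cast_eq_zero K 2

lemma exists_omega (hcard : Fintype.card K = 4) :
    ∃ ω : K, ω ≠ 0 ∧ ω ≠ 1 ∧ ω ^ 2 = ω + 1 := by
  classical
  have hne : ¬ (∀ x : K, x = 0 ∨ x = 1) := by
    intro h
    have hsub : (Finset.univ : Finset K) ⊆ ({0, 1} : Finset K) := by
      intro x _
      rcases h x with h | h <;> simp [h]
    have hle := Finset.card_le_card hsub
    rw [Finset.card_univ, hcard] at hle
    have h2 : ({0, 1} : Finset K).card ≤ 2 :=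
      (Finset.card_insert_le _ _).trans (by simp)
    omega
  push_neg at hne
  obtain ⟨ω, hω0, hω1⟩ := hne
  refine ⟨ω, hω0, hω1, ?_⟩
  have h3 : ω ^ 3 = 1 := by
    have := FiniteField.pow_card_sub_one_eq_one ω hω0
    rwa [hcard] at this
  have hfac : (ω - 1) * (ω ^ 2 + ω + 1) = 0 := by linear_combination h3
  have h1 : ω ^ 2 + ω + 1 = 0 := by
    rcases mul_eq_zero.mp hfac with h | h
    · exact absurd (by linear_combination h : ω = 1) hω1
    · exact h
  linear_combination h1 - (ω + 1) * (char2' (K := K))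

section Omega
variable (ω : K) (hω0 : ω ≠ 0) (hω1 : ω ≠ 1) (hω2 : ω ^ 2 = ω + 1)

include hω0 hω1 hω2 in
lemma univ_eq (hcard : Fintype.card K = 4) :
    (Finset.univ : Finset K) = {0, 1, ω, ω + 1} := by
  have h2 : (2 : K) = 0 := char2' (K := K)
  have hw10 : ω + 1 ≠ 0 := by
    intro h
    exact hω1 (by linear_combination h - h2)
  have hw11 : ω + 1 ≠ 1 := by
    intro h
    exact hω0 (by linear_combination h)
  have hw1w : ω + 1 ≠ ω := by
    intro h
    exact (one_ne_zero : (1:K) ≠ 0) (by linear_combination h)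
  symm
  apply Finset.eq_univ_of_card
  rw [hcard]
  rw [Finset.card_insert_of_notMem (by simp [hω0.symm, hw10.symm]),
      Finset.card_insert_of_notMem (by simp [hω1.symm, hw11.symm]),
      Finset.card_insert_of_notMem (by simp [hw1w.symm]),
      Finset.card_singleton]

include hω0 hω1 hω2 in
lemma sum_univ_K (hcard : Fintype.card K = 4) (f : K → ℂ) :
    ∑ y : K, f y = f 0 + f 1 + f ω + f (ω + 1) := by
  have h2 : (2 : K) = 0 := char2' (K := K)
  have hw10 : ω + 1 ≠ 0 := fun h => hω1 (by linear_combination h - h2)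
  have hw11 : ω + 1 ≠ 1 := fun h => hω0 (by linear_combination h)
  have hw1w : ω + 1 ≠ ω := fun h => (one_ne_zero : (1:K) ≠ 0) (by linear_combination h)
  rw [univ_eq ω hω0 hω1 hω2 hcard]
  rw [Finset.sum_insert (by simp [hω0.symm, hw10.symm]),
      Finset.sum_insert (by simp [hω1.symm, hw11.symm]),
      Finset.sum_insert (by simp [hw1w.symm]),
      Finset.sum_singleton]
  ring

include hω0 hω1 hω2 in
lemma trace_vals (hcard : Fintype.card K = 4) :
    Algebra.trace (ZMod 2) K 0 = 0 ∧ Algebra.trace (ZMod 2) K 1 = 0 ∧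
    Algebra.trace (ZMod 2) K ω = 1 ∧ Algebra.trace (ZMod 2) K (ω + 1) = 1 := by
  haveI : Module.Finite (ZMod 2) K := Module.Finite.of_finite
  haveI : Algebra.IsAlgebraic (ZMod 2) K := Algebra.IsAlgebraic.of_finite (ZMod 2) K
  have htr0 : Algebra.trace (ZMod 2) K 0 = 0 := map_zero _
  have hrank : Module.finrank (ZMod 2) K = 2 := by
    have hc := Module.card_eq_pow_finrank (K := ZMod 2) (V := K)
    rw [hcard, ZMod.card] at hc
    have : (2:ℕ) ^ 2 = 2 ^ Module.finrank (ZMod 2) K := by omega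
    exact (Nat.pow_right_injective (le_refl 2) this.symm)
  have htr1 : Algebra.trace (ZMod 2) K 1 = 0 := by
    have := Algebra.trace_algebraMap (R := ZMod 2) (S := K) 1
    rw [map_one] at this
    rw [this, hrank]
    decide
  obtain ⟨z, hz⟩ := Algebra.trace_surjective (ZMod 2) K (1 : ZMod 2)
  have htrw : Algebra.trace (ZMod 2) K ω = 1 := by
    by_contra hne
    have hw : Algebra.trace (ZMod 2) K ω = 0 := by
      have h01 : ∀ a : ZMod 2, a = 0 ∨ a = 1 := by decide
      rcases h01 (Algebra.trace (ZMod 2) K ω) with h | h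
      · exact h
      · exact absurd h hne
    have hall : ∀ x : K, Algebra.trace (ZMod 2) K x = 0 := by
      intro x
      have hx : x ∈ (Finset.univ : Finset K) := Finset.mem_univ x
      rw [univ_eq ω hω0 hω1 hω2 hcard] at hx
      simp only [Finset.mem_insert, Finset.mem_singleton] at hx
      rcases hx with h | h | h | h <;> subst h
      · exact htr0
      · exact htr1
      · exact hw
      · rw [map_add, hw, htr1]; rfl
    rw [hall z] at hz
    exact one_ne_zero hz.symm
  refine ⟨htr0, htr1, htrw, ?_⟩
  rw [map_add, htrw, htr1]
  rfl

end Omega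

variable (K : Type*) [Field K] [Fintype K] [Algebra (ZMod 2) K]

def Vv (n : ℕ) (α β : K) : ℂ :=
  ∑ x : Fin n → K, if esymmVal n 1 x = α ∧ esymmVal n 2 x = β
    then (-1 : ℂ) ^ ((Algebra.trace (ZMod 2) K (esymmVal n 3 x)).val) else 0

variable {K}

lemma esymmVal_zero {n : ℕ} (x : Fin n → K) : esymmVal n 0 x = 1 := by
  simp [esymmVal]

lemma esymmVal_zero_vars (k : ℕ) (x : Fin 0 → K) : esymmVal 0 (k+1) x = 0 := by
  have : (Finset.univ : Finset (Fin 0)) = ∅ := Finset.univ_eq_empty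
  rw [esymmVal, this]
  rw [Finset.powersetCard_eq_empty.mpr (by simp)]
  simp

lemma chr_add (u v : K) :
    (-1 : ℂ) ^ ((Algebra.trace (ZMod 2) K (u + v)).val)
      = (-1 : ℂ) ^ ((Algebra.trace (ZMod 2) K u).val)
        * (-1 : ℂ) ^ ((Algebra.trace (ZMod 2) K v).val) := by
  rw [map_add]
  have hz : ∀ z : ZMod 2, z = 0 ∨ z = 1 := by decide
  rcases hz (Algebra.trace (ZMod 2) K u) with h | h <;>
    rcases hz (Algebra.trace (ZMod 2) K v) with h' | h' <;>
      rw [h, h'] <;> norm_num [show ZMod.val (2 : ZMod 2) = 0 from rfl, show ZMod.val (1 : ZMod 2) = 1 from rfl, show ZMod.val (0 : ZMod 2) = 0 from rfl]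

lemma esymmVal_smul {n k : ℕ} (c : K) (x : Fin n → K) :
    esymmVal n k (fun i => c * x i) = c ^ k * esymmVal n k x := by
  rw [esymmVal, esymmVal, Finset.mul_sum]
  apply Finset.sum_congr rfl
  intro s hs
  rw [Finset.prod_mul_distrib, Finset.prod_const,
    (Finset.mem_powersetCard.mp hs).2]

lemma Vv_scale (n : ℕ) (c α β : K) (hc : c ≠ 0) (hc3 : c ^ 3 = 1) :
    Vv K n (c * α) (c ^ 2 * β) = Vv K n α β := by
  classical
  rw [Vv, Vv]
  rw [← Equiv.sum_comp (Equiv.piCongrRight (fun _ : Fin n => Equiv.mulLeft₀ c hc))]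
  apply Finset.sum_congr rfl
  intro x _
  have hfun : ((Equiv.piCongrRight (fun _ : Fin n => Equiv.mulLeft₀ c hc)) x : Fin n → K)
      = fun i => c * x i := rfl
  rw [hfun, esymmVal_smul, esymmVal_smul, esymmVal_smul, hc3, one_mul, pow_one]
  have hcond : (c * esymmVal n 1 x = c * α ∧ c ^ 2 * esymmVal n 2 x = c ^ 2 * β)
      ↔ (esymmVal n 1 x = α ∧ esymmVal n 2 x = β) := by
    constructor
    · rintro ⟨h1, h2⟩
      exact ⟨mul_left_cancel₀ hc h1, mul_left_cancel₀ (pow_ne_zero 2 hc) h2⟩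
    · rintro ⟨h1, h2⟩
      exact ⟨by rw [h1], by rw [h2]⟩
  simp only [hcond]

lemma multiset_esymm_cons (s : Multiset K) (a : K) (k : ℕ) :
    (a ::ₘ s).esymm (k+1) = s.esymm (k+1) + a * s.esymm k := by
  rw [Multiset.esymm, Multiset.powersetCard_cons, Multiset.map_add, Multiset.sum_add,
    Multiset.map_map]
  have h2 : (Multiset.map (Multiset.prod ∘ Multiset.cons a) (Multiset.powersetCard k s)).sum
      = a * s.esymm k := by
    rw [Multiset.esymm, ← Multiset.sum_map_mul_left]
    apply congrArg
    apply Multiset.map_congr rfl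
    intro t _
    simp [Multiset.prod_cons]
  rw [h2]
  rfl

lemma esymmVal_cons (n k : ℕ) (y : K) (x : Fin n → K) :
    esymmVal (n+1) (k+1) (Fin.cons y x) = esymmVal n (k+1) x + y * esymmVal n k x := by
  have h1 : ∀ (m j : ℕ) (z : Fin m → K),
      esymmVal m j z = ((Finset.univ : Finset (Fin m)).val.map z).esymm j := by
    intro m j z
    rw [Finset.esymm_map_val]
    rfl
  rw [h1, h1, h1]
  have huniv : (Finset.univ : Finset (Fin (n+1))).val.map (Fin.cons y x) =
      y ::ₘ (Finset.univ : Finset (Fin n)).val.map x := by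
    rw [Fin.univ_succ, Finset.cons_val, Multiset.map_cons, Finset.map_val, Multiset.map_map]
    simp [Function.comp_def]
  rw [huniv, multiset_esymm_cons]

lemma e1_cons (n : ℕ) (y : K) (x : Fin n → K) :
    esymmVal (n+1) 1 (Fin.cons y x) = esymmVal n 1 x + y := by
  have := esymmVal_cons n 0 y x
  rwa [esymmVal_zero, mul_one] at this

lemma e2_cons (n : ℕ) (y : K) (x : Fin n → K) :
    esymmVal (n+1) 2 (Fin.cons y x) = esymmVal n 2 x + y * esymmVal n 1 x :=
  esymmVal_cons n 1 y x

lemma e3_cons (n : ℕ) (y : K) (x : Fin n → K) :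
    esymmVal (n+1) 3 (Fin.cons y x) = esymmVal n 3 x + y * esymmVal n 2 x :=
  esymmVal_cons n 2 y x

lemma Vv_succ (h2K : (2:K) = 0) (n : ℕ) (α β : K) :
    Vv K (n+1) α β = ∑ y : K,
      (-1:ℂ)^((Algebra.trace (ZMod 2) K (y*(β + y*α + y^2))).val)
        * Vv K n (α+y) (β + y*α + y^2) := by
  classical
  rw [Vv]
  rw [← Equiv.sum_comp (Fin.consEquiv (fun _ : Fin (n+1) => K))]
  rw [Fintype.sum_prod_type]
  apply Finset.sum_congr rfl
  intro y _
  rw [Vv, Finset.mul_sum]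
  apply Finset.sum_congr rfl
  intro x _
  have hcons : (Fin.consEquiv (fun _ : Fin (n+1) => K)) (y, x) = Fin.cons y x := rfl
  rw [hcons, e1_cons, e2_cons, e3_cons]
  by_cases h1 : esymmVal n 1 x = α + y
  · by_cases h2 : esymmVal n 2 x = β + y*α + y^2
    · rw [if_pos (⟨by linear_combination h1 + y * h2K, by
        linear_combination h2 + y * h1 + (y*α + y^2) * h2K⟩ :
          esymmVal n 1 x + y = α ∧ esymmVal n 2 x + y * esymmVal n 1 x = β),
        if_pos ⟨h1, h2⟩]
      rw [h2, chr_add]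
      ring
    · rw [if_neg (fun hc => h2 (by linear_combination hc.2 - y * h1 + (-(y*α) - y^2) * h2K)),
        if_neg (fun hc => h2 hc.2)]
      ring
  · rw [if_neg (fun hc => h1 (by linear_combination hc.1 + (-y) * h2K)),
      if_neg (fun hc => h1 hc.1)]
    ring

lemma Vv_zero (α β : K) : Vv K 0 α β = if α = 0 ∧ β = 0 then 1 else 0 := by
  classical
  rw [Vv]
  rw [Fintype.sum_unique]
  rw [esymmVal_zero_vars 0, esymmVal_zero_vars 1, esymmVal_zero_vars 2]
  rw [map_zero]
  simp [eq_comm]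

lemma Vv_total (n : ℕ) :
    ∑ α : K, ∑ β : K, Vv K n α β
      = ∑ x : Fin n → K, (-1:ℂ)^((Algebra.trace (ZMod 2) K (esymmVal n 3 x)).val) := by
  classical
  simp only [Vv]
  refine Eq.trans (Finset.sum_congr rfl fun α _ => Finset.sum_comm) ?_
  refine Eq.trans Finset.sum_comm ?_
  refine Finset.sum_congr rfl fun x _ => ?_
  simp [ite_and, Finset.sum_ite_eq]

lemma Vv_succ_expand (hcard : Fintype.card K = 4) (ω : K) (hω0 : ω ≠ 0) (hω1 : ω ≠ 1)
    (hω2 : ω ^ 2 = ω + 1) (h2K : (2:K) = 0) (n : ℕ) (α β : K) :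
    Vv K (n+1) α β =
      (-1:ℂ)^((Algebra.trace (ZMod 2) K (0 * (β + 0 * α + 0 ^ 2))).val)
          * Vv K n (α + 0) (β + 0 * α + 0 ^ 2)
      + (-1:ℂ)^((Algebra.trace (ZMod 2) K (1 * (β + 1 * α + 1 ^ 2))).val)
          * Vv K n (α + 1) (β + 1 * α + 1 ^ 2)
      + (-1:ℂ)^((Algebra.trace (ZMod 2) K (ω * (β + ω * α + ω ^ 2))).val)
          * Vv K n (α + ω) (β + ω * α + ω ^ 2)
      + (-1:ℂ)^((Algebra.trace (ZMod 2) K ((ω + 1) * (β + (ω + 1) * α + (ω + 1) ^ 2))).val)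
          * Vv K n (α + (ω + 1)) (β + (ω + 1) * α + (ω + 1) ^ 2) := by
  rw [Vv_succ h2K n α β]
  exact sum_univ_K ω hω0 hω1 hω2 hcard _
lemma case00 (hcard : Fintype.card K = 4) (ω : K) (hω0 : ω ≠ 0) (hω1 : ω ≠ 1) (hω2 : ω ^ 2 = ω + 1) (h2K : (2:K) = 0) (hω3 : ω ^ 3 = 1) (hω13 : (ω + 1) ^ 3 = 1) (hw10 : ω + 1 ≠ 0) (htr0 : Algebra.trace (ZMod 2) K 0 = 0) (htr1 : Algebra.trace (ZMod 2) K 1 = 0) (htrw : Algebra.trace (ZMod 2) K ω = 1) (htrw1 : Algebra.trace (ZMod 2) K (ω + 1) = 1)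
    (n : ℕ) (ih00 : Vv K n 0 0 = st n 0) (ih01 : Vv K n 0 1 = st n 1) (ih10 : Vv K n 1 0 = st n 2) (ih11 : Vv K n 1 1 = st n 3) (ih1w : Vv K n 1 ω = st n 4) (ih1z : Vv K n 1 (ω + 1) = st n 4) :
    Vv K (n+1) 0 0 = st (n+1) 0 := by
  rw [Vv_succ_expand hcard ω hω0 hω1 hω2 h2K n 0 0]
  have hT0 : (0 * (0 + 0 * 0 + 0 ^ 2) : K) = 0 := by ring
  have hV0 := Vv_scale (K := K) n 1 0 0 one_ne_zero (one_pow 3)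
  rw [show (1 * 0 : K) = 0 + 0 from by ring,
    show (1 ^ 2 * 0 : K) = 0 + 0 * 0 + 0 ^ 2 from by ring] at hV0
  have hT1 : (1 * (0 + 1 * 0 + 1 ^ 2) : K) = 1 := by ring
  have hV1 := Vv_scale (K := K) n 1 1 1 one_ne_zero (one_pow 3)
  rw [show (1 * 1 : K) = 0 + 1 from by ring,
    show (1 ^ 2 * 1 : K) = 0 + 1 * 0 + 1 ^ 2 from by ring] at hV1
  have hT2 : (ω * (0 + ω * 0 + ω ^ 2) : K) = 1 := by linear_combination ((1) + ω) * hω2 + (ω) * h2K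
  have hV2 := Vv_scale (K := K) n ω 1 1 hω0 (hω3)
  rw [show (ω * 1 : K) = 0 + ω from by ring,
    show (ω ^ 2 * 1 : K) = 0 + ω * 0 + ω ^ 2 from by ring] at hV2
  have hT3 : ((ω + 1) * (0 + (ω + 1) * 0 + (ω + 1) ^ 2) : K) = 1 := by linear_combination ((4) + ω) * hω2 + ((2) + (4) * ω) * h2K
  have hV3 := Vv_scale (K := K) n (ω + 1) 1 1 hw10 (hω13)
  rw [show ((ω + 1) * 1 : K) = 0 + (ω + 1) from by ring,
    show ((ω + 1) ^ 2 * 1 : K) = 0 + (ω + 1) * 0 + (ω + 1) ^ 2 from by ring] at hV3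
  rw [hT0, hT1, hT2, hT3, hV0, hV1, hV2, hV3, ih00, ih11, htr0, htr1]
  simp only [ZMod.val_zero, ZMod.val_one, pow_zero, pow_one, st_s0]
  ring

lemma case01 (hcard : Fintype.card K = 4) (ω : K) (hω0 : ω ≠ 0) (hω1 : ω ≠ 1) (hω2 : ω ^ 2 = ω + 1) (h2K : (2:K) = 0) (hω3 : ω ^ 3 = 1) (hω13 : (ω + 1) ^ 3 = 1) (hw10 : ω + 1 ≠ 0) (htr0 : Algebra.trace (ZMod 2) K 0 = 0) (htr1 : Algebra.trace (ZMod 2) K 1 = 0) (htrw : Algebra.trace (ZMod 2) K ω = 1) (htrw1 : Algebra.trace (ZMod 2) K (ω + 1) = 1)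
    (n : ℕ) (ih00 : Vv K n 0 0 = st n 0) (ih01 : Vv K n 0 1 = st n 1) (ih10 : Vv K n 1 0 = st n 2) (ih11 : Vv K n 1 1 = st n 3) (ih1w : Vv K n 1 ω = st n 4) (ih1z : Vv K n 1 (ω + 1) = st n 4) :
    Vv K (n+1) 0 1 = st (n+1) 1 := by
  rw [Vv_succ_expand hcard ω hω0 hω1 hω2 h2K n 0 1]
  have hT0 : (0 * (1 + 0 * 0 + 0 ^ 2) : K) = 0 := by ring
  have hV0 := Vv_scale (K := K) n 1 0 1 one_ne_zero (one_pow 3)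
  rw [show (1 * 0 : K) = 0 + 0 from by ring,
    show (1 ^ 2 * 1 : K) = 1 + 0 * 0 + 0 ^ 2 from by ring] at hV0
  have hT1 : (1 * (1 + 1 * 0 + 1 ^ 2) : K) = 0 := by linear_combination ((1)) * h2K
  have hV1 := Vv_scale (K := K) n 1 1 0 one_ne_zero (one_pow 3)
  rw [show (1 * 1 : K) = 0 + 1 from by ring,
    show (1 ^ 2 * 0 : K) = 1 + 1 * 0 + 1 ^ 2 from by linear_combination ((-1)) * h2K] at hV1
  have hT2 : (ω * (1 + ω * 0 + ω ^ 2) : K) = (ω + 1) := by linear_combination ((1) + ω) * hω2 + (ω) * h2K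
  have hV2 := Vv_scale (K := K) n ω 1 (ω + 1) hω0 (hω3)
  rw [show (ω * 1 : K) = 0 + ω from by ring,
    show (ω ^ 2 * (ω + 1) : K) = 1 + ω * 0 + ω ^ 2 from by linear_combination ((1) + ω) * hω2 + (ω) * h2K] at hV2
  have hT3 : ((ω + 1) * (1 + (ω + 1) * 0 + (ω + 1) ^ 2) : K) = ω := by linear_combination ((4) + ω) * hω2 + ((3) + (4) * ω) * h2K
  have hV3 := Vv_scale (K := K) n (ω + 1) 1 ω hw10 (hω13)
  rw [show ((ω + 1) * 1 : K) = 0 + (ω + 1) from by ring,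
    show ((ω + 1) ^ 2 * ω : K) = 1 + (ω + 1) * 0 + (ω + 1) ^ 2 from by linear_combination ((2) + ω) * hω2 + (ω) * h2K] at hV3
  rw [hT0, hT1, hT2, hT3, hV0, hV1, hV2, hV3, ih01, ih10, ih1z, ih1w, htr0, htrw, htrw1]
  simp only [ZMod.val_zero, ZMod.val_one, pow_zero, pow_one, st_s1]
  ring

lemma case10 (hcard : Fintype.card K = 4) (ω : K) (hω0 : ω ≠ 0) (hω1 : ω ≠ 1) (hω2 : ω ^ 2 = ω + 1) (h2K : (2:K) = 0) (hω3 : ω ^ 3 = 1) (hω13 : (ω + 1) ^ 3 = 1) (hw10 : ω + 1 ≠ 0) (htr0 : Algebra.trace (ZMod 2) K 0 = 0) (htr1 : Algebra.trace (ZMod 2) K 1 = 0) (htrw : Algebra.trace (ZMod 2) K ω = 1) (htrw1 : Algebra.trace (ZMod 2) K (ω + 1) = 1)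
    (n : ℕ) (ih00 : Vv K n 0 0 = st n 0) (ih01 : Vv K n 0 1 = st n 1) (ih10 : Vv K n 1 0 = st n 2) (ih11 : Vv K n 1 1 = st n 3) (ih1w : Vv K n 1 ω = st n 4) (ih1z : Vv K n 1 (ω + 1) = st n 4) :
    Vv K (n+1) 1 0 = st (n+1) 2 := by
  rw [Vv_succ_expand hcard ω hω0 hω1 hω2 h2K n 1 0]
  have hT0 : (0 * (0 + 0 * 1 + 0 ^ 2) : K) = 0 := by ring
  have hV0 := Vv_scale (K := K) n 1 1 0 one_ne_zero (one_pow 3)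
  rw [show (1 * 1 : K) = 1 + 0 from by ring,
    show (1 ^ 2 * 0 : K) = 0 + 0 * 1 + 0 ^ 2 from by ring] at hV0
  have hT1 : (1 * (0 + 1 * 1 + 1 ^ 2) : K) = 0 := by linear_combination ((1)) * h2K
  have hV1 := Vv_scale (K := K) n 1 0 0 one_ne_zero (one_pow 3)
  rw [show (1 * 0 : K) = 1 + 1 from by linear_combination ((-1)) * h2K,
    show (1 ^ 2 * 0 : K) = 0 + 1 * 1 + 1 ^ 2 from by linear_combination ((-1)) * h2K] at hV1
  have hT2 : (ω * (0 + ω * 1 + ω ^ 2) : K) = ω := by linear_combination ((2) + ω) * hω2 + ((1) + ω) * h2K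
  have hV2 := Vv_scale (K := K) n (ω + 1) 1 (ω + 1) hw10 (hω13)
  rw [show ((ω + 1) * 1 : K) = 1 + ω from by ring,
    show ((ω + 1) ^ 2 * (ω + 1) : K) = 0 + ω * 1 + ω ^ 2 from by linear_combination ((3) + ω) * hω2 + ((2) + (3) * ω) * h2K] at hV2
  have hT3 : ((ω + 1) * (0 + (ω + 1) * 1 + (ω + 1) ^ 2) : K) = (ω + 1) := by linear_combination ((5) + ω) * hω2 + ((3) + (5) * ω) * h2K
  have hV3 := Vv_scale (K := K) n ω 1 ω hω0 (hω3)
  rw [show (ω * 1 : K) = 1 + (ω + 1) from by linear_combination ((-1)) * h2K,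
    show (ω ^ 2 * ω : K) = 0 + (ω + 1) * 1 + (ω + 1) ^ 2 from by linear_combination (ω) * hω2 + ((-1) + (-1) * ω) * h2K] at hV3
  rw [hT0, hT1, hT2, hT3, hV0, hV1, hV2, hV3, ih10, ih00, ih1z, ih1w, htr0, htrw, htrw1]
  simp only [ZMod.val_zero, ZMod.val_one, pow_zero, pow_one, st_s2]
  ring

lemma case11 (hcard : Fintype.card K = 4) (ω : K) (hω0 : ω ≠ 0) (hω1 : ω ≠ 1) (hω2 : ω ^ 2 = ω + 1) (h2K : (2:K) = 0) (hω3 : ω ^ 3 = 1) (hω13 : (ω + 1) ^ 3 = 1) (hw10 : ω + 1 ≠ 0) (htr0 : Algebra.trace (ZMod 2) K 0 = 0) (htr1 : Algebra.trace (ZMod 2) K 1 = 0) (htrw : Algebra.trace (ZMod 2) K ω = 1) (htrw1 : Algebra.trace (ZMod 2) K (ω + 1) = 1)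
    (n : ℕ) (ih00 : Vv K n 0 0 = st n 0) (ih01 : Vv K n 0 1 = st n 1) (ih10 : Vv K n 1 0 = st n 2) (ih11 : Vv K n 1 1 = st n 3) (ih1w : Vv K n 1 ω = st n 4) (ih1z : Vv K n 1 (ω + 1) = st n 4) :
    Vv K (n+1) 1 1 = st (n+1) 3 := by
  rw [Vv_succ_expand hcard ω hω0 hω1 hω2 h2K n 1 1]
  have hT0 : (0 * (1 + 0 * 1 + 0 ^ 2) : K) = 0 := by ring
  have hV0 := Vv_scale (K := K) n 1 1 1 one_ne_zero (one_pow 3)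
  rw [show (1 * 1 : K) = 1 + 0 from by ring,
    show (1 ^ 2 * 1 : K) = 1 + 0 * 1 + 0 ^ 2 from by ring] at hV0
  have hT1 : (1 * (1 + 1 * 1 + 1 ^ 2) : K) = 1 := by linear_combination ((1)) * h2K
  have hV1 := Vv_scale (K := K) n 1 0 1 one_ne_zero (one_pow 3)
  rw [show (1 * 0 : K) = 1 + 1 from by linear_combination ((-1)) * h2K,
    show (1 ^ 2 * 1 : K) = 1 + 1 * 1 + 1 ^ 2 from by linear_combination ((-1)) * h2K] at hV1
  have hT2 : (ω * (1 + ω * 1 + ω ^ 2) : K) = 0 := by linear_combination ((2) + ω) * hω2 + ((1) + (2) * ω) * h2K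
  have hV2 := Vv_scale (K := K) n (ω + 1) 1 0 hw10 (hω13)
  rw [show ((ω + 1) * 1 : K) = 1 + ω from by ring,
    show ((ω + 1) ^ 2 * 0 : K) = 1 + ω * 1 + ω ^ 2 from by linear_combination ((-1)) * hω2 + ((-1) + (-1) * ω) * h2K] at hV2
  have hT3 : ((ω + 1) * (1 + (ω + 1) * 1 + (ω + 1) ^ 2) : K) = 0 := by linear_combination ((5) + ω) * hω2 + ((4) + (6) * ω) * h2K
  have hV3 := Vv_scale (K := K) n ω 1 0 hω0 (hω3)
  rw [show (ω * 1 : K) = 1 + (ω + 1) from by linear_combination ((-1)) * h2K,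
    show (ω ^ 2 * 0 : K) = 1 + (ω + 1) * 1 + (ω + 1) ^ 2 from by linear_combination ((-1)) * hω2 + ((-2) + (-2) * ω) * h2K] at hV3
  rw [hT0, hT1, hT2, hT3, hV0, hV1, hV2, hV3, ih11, ih01, ih10, htr0, htr1]
  simp only [ZMod.val_zero, ZMod.val_one, pow_zero, pow_one, st_s3]
  ring

lemma case1w (hcard : Fintype.card K = 4) (ω : K) (hω0 : ω ≠ 0) (hω1 : ω ≠ 1) (hω2 : ω ^ 2 = ω + 1) (h2K : (2:K) = 0) (hω3 : ω ^ 3 = 1) (hω13 : (ω + 1) ^ 3 = 1) (hw10 : ω + 1 ≠ 0) (htr0 : Algebra.trace (ZMod 2) K 0 = 0) (htr1 : Algebra.trace (ZMod 2) K 1 = 0) (htrw : Algebra.trace (ZMod 2) K ω = 1) (htrw1 : Algebra.trace (ZMod 2) K (ω + 1) = 1)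
    (n : ℕ) (ih00 : Vv K n 0 0 = st n 0) (ih01 : Vv K n 0 1 = st n 1) (ih10 : Vv K n 1 0 = st n 2) (ih11 : Vv K n 1 1 = st n 3) (ih1w : Vv K n 1 ω = st n 4) (ih1z : Vv K n 1 (ω + 1) = st n 4) :
    Vv K (n+1) 1 ω = st (n+1) 4 := by
  rw [Vv_succ_expand hcard ω hω0 hω1 hω2 h2K n 1 ω]
  have hT0 : (0 * (ω + 0 * 1 + 0 ^ 2) : K) = 0 := by ring
  have hV0 := Vv_scale (K := K) n 1 1 ω one_ne_zero (one_pow 3)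
  rw [show (1 * 1 : K) = 1 + 0 from by ring,
    show (1 ^ 2 * ω : K) = ω + 0 * 1 + 0 ^ 2 from by ring] at hV0
  have hT1 : (1 * (ω + 1 * 1 + 1 ^ 2) : K) = ω := by linear_combination ((1)) * h2K
  have hV1 := Vv_scale (K := K) n (ω + 1) 0 1 hw10 (hω13)
  rw [show ((ω + 1) * 0 : K) = 1 + 1 from by linear_combination ((-1)) * h2K,
    show ((ω + 1) ^ 2 * 1 : K) = ω + 1 * 1 + 1 ^ 2 from by linear_combination ((1)) * hω2 + (ω) * h2K] at hV1
  have hT2 : (ω * (ω + ω * 1 + ω ^ 2) : K) = 1 := by linear_combination ((3) + ω) * hω2 + ((1) + (2) * ω) * h2K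
  have hV2 := Vv_scale (K := K) n (ω + 1) 1 ω hw10 (hω13)
  rw [show ((ω + 1) * 1 : K) = 1 + ω from by ring,
    show ((ω + 1) ^ 2 * ω : K) = ω + ω * 1 + ω ^ 2 from by linear_combination ((2) + ω) * hω2 + ((1) + ω) * h2K] at hV2
  have hT3 : ((ω + 1) * (ω + (ω + 1) * 1 + (ω + 1) ^ 2) : K) = ω := by linear_combination ((6) + ω) * hω2 + ((4) + (6) * ω) * h2K
  have hV3 := Vv_scale (K := K) n ω 1 1 hω0 (hω3)
  rw [show (ω * 1 : K) = 1 + (ω + 1) from by linear_combination ((-1)) * h2K,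
    show (ω ^ 2 * 1 : K) = ω + (ω + 1) * 1 + (ω + 1) ^ 2 from by linear_combination ((-1) + (-2) * ω) * h2K] at hV3
  rw [hT0, hT1, hT2, hT3, hV0, hV1, hV2, hV3, ih1w, ih01, ih11, htr0, htr1, htrw]
  simp only [ZMod.val_zero, ZMod.val_one, pow_zero, pow_one, st_s4]
  ring

lemma case1z (hcard : Fintype.card K = 4) (ω : K) (hω0 : ω ≠ 0) (hω1 : ω ≠ 1) (hω2 : ω ^ 2 = ω + 1) (h2K : (2:K) = 0) (hω3 : ω ^ 3 = 1) (hω13 : (ω + 1) ^ 3 = 1) (hw10 : ω + 1 ≠ 0) (htr0 : Algebra.trace (ZMod 2) K 0 = 0) (htr1 : Algebra.trace (ZMod 2) K 1 = 0) (htrw : Algebra.trace (ZMod 2) K ω = 1) (htrw1 : Algebra.trace (ZMod 2) K (ω + 1) = 1)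
    (n : ℕ) (ih00 : Vv K n 0 0 = st n 0) (ih01 : Vv K n 0 1 = st n 1) (ih10 : Vv K n 1 0 = st n 2) (ih11 : Vv K n 1 1 = st n 3) (ih1w : Vv K n 1 ω = st n 4) (ih1z : Vv K n 1 (ω + 1) = st n 4) :
    Vv K (n+1) 1 (ω + 1) = st (n+1) 4 := by
  rw [Vv_succ_expand hcard ω hω0 hω1 hω2 h2K n 1 (ω + 1)]
  have hT0 : (0 * ((ω + 1) + 0 * 1 + 0 ^ 2) : K) = 0 := by ring
  have hV0 := Vv_scale (K := K) n 1 1 (ω + 1) one_ne_zero (one_pow 3)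
  rw [show (1 * 1 : K) = 1 + 0 from by ring,
    show (1 ^ 2 * (ω + 1) : K) = (ω + 1) + 0 * 1 + 0 ^ 2 from by ring] at hV0
  have hT1 : (1 * ((ω + 1) + 1 * 1 + 1 ^ 2) : K) = (ω + 1) := by linear_combination ((1)) * h2K
  have hV1 := Vv_scale (K := K) n ω 0 1 hω0 (hω3)
  rw [show (ω * 0 : K) = 1 + 1 from by linear_combination ((-1)) * h2K,
    show (ω ^ 2 * 1 : K) = (ω + 1) + 1 * 1 + 1 ^ 2 from by linear_combination ((1)) * hω2 + ((-1)) * h2K] at hV1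
  have hT2 : (ω * ((ω + 1) + ω * 1 + ω ^ 2) : K) = (ω + 1) := by linear_combination ((3) + ω) * hω2 + ((1) + (2) * ω) * h2K
  have hV2 := Vv_scale (K := K) n (ω + 1) 1 1 hw10 (hω13)
  rw [show ((ω + 1) * 1 : K) = 1 + ω from by ring,
    show ((ω + 1) ^ 2 * 1 : K) = (ω + 1) + ω * 1 + ω ^ 2 from by ring] at hV2
  have hT3 : ((ω + 1) * ((ω + 1) + (ω + 1) * 1 + (ω + 1) ^ 2) : K) = 1 := by linear_combination ((6) + ω) * hω2 + ((4) + (7) * ω) * h2K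
  have hV3 := Vv_scale (K := K) n ω 1 (ω + 1) hω0 (hω3)
  rw [show (ω * 1 : K) = 1 + (ω + 1) from by linear_combination ((-1)) * h2K,
    show (ω ^ 2 * (ω + 1) : K) = (ω + 1) + (ω + 1) * 1 + (ω + 1) ^ 2 from by linear_combination ((1) + ω) * hω2 + ((-1) + (-1) * ω) * h2K] at hV3
  rw [hT0, hT1, hT2, hT3, hV0, hV1, hV2, hV3, ih1z, ih01, ih11, htr0, htr1, htrw1]
  simp only [ZMod.val_zero, ZMod.val_one, pow_zero, pow_one, st_s4]
  ring

lemma Vv_sum_all (hcard : Fintype.card K = 4) (ω : K) (hω0 : ω ≠ 0) (hω1 : ω ≠ 1) (hω2 : ω ^ 2 = ω + 1) (h2K : (2:K) = 0) (hω3 : ω ^ 3 = 1) (hω13 : (ω + 1) ^ 3 = 1) (hw10 : ω + 1 ≠ 0) (htr0 : Algebra.trace (ZMod 2) K 0 = 0) (htr1 : Algebra.trace (ZMod 2) K 1 = 0) (htrw : Algebra.trace (ZMod 2) K ω = 1) (htrw1 : Algebra.trace (ZMod 2) K (ω + 1) = 1)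
    (n : ℕ) (ih00 : Vv K n 0 0 = st n 0) (ih01 : Vv K n 0 1 = st n 1) (ih10 : Vv K n 1 0 = st n 2) (ih11 : Vv K n 1 1 = st n 3) (ih1w : Vv K n 1 ω = st n 4) (ih1z : Vv K n 1 (ω + 1) = st n 4) :
    ∑ α : K, ∑ β : K, Vv K n α β
      = st n 0 + 3 * st n 1 + 3 * st n 2 + 3 * st n 3 + 6 * st n 4 := by
  have etop : ∑ α : K, ∑ β : K, Vv K n α β = (∑ β : K, Vv K n 0 β) + (∑ β : K, Vv K n 1 β) + (∑ β : K, Vv K n ω β) + (∑ β : K, Vv K n (ω + 1) β) := sum_univ_K ω hω0 hω1 hω2 hcard _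
  have e0 : ∑ β : K, Vv K n 0 β = Vv K n 0 0 + Vv K n 0 1 + Vv K n 0 ω + Vv K n 0 (ω + 1) := sum_univ_K ω hω0 hω1 hω2 hcard _
  have e1 : ∑ β : K, Vv K n 1 β = Vv K n 1 0 + Vv K n 1 1 + Vv K n 1 ω + Vv K n 1 (ω + 1) := sum_univ_K ω hω0 hω1 hω2 hcard _
  have e2 : ∑ β : K, Vv K n ω β = Vv K n ω 0 + Vv K n ω 1 + Vv K n ω ω + Vv K n ω (ω + 1) := sum_univ_K ω hω0 hω1 hω2 hcard _
  have e3 : ∑ β : K, Vv K n (ω + 1) β = Vv K n (ω + 1) 0 + Vv K n (ω + 1) 1 + Vv K n (ω + 1) ω + Vv K n (ω + 1) (ω + 1) := sum_univ_K ω hω0 hω1 hω2 hcard _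
  rw [etop, e0, e1, e2, e3]
  have hs02 := Vv_scale (K := K) n (ω + 1) 0 1 hw10 (hω13)
  rw [show ((ω + 1) * 0 : K) = 0 from by ring,
    show ((ω + 1) ^ 2 * 1 : K) = ω from by linear_combination ((1)) * hω2 + ((1) + ω) * h2K] at hs02
  have hs03 := Vv_scale (K := K) n ω 0 1 hω0 (hω3)
  rw [show (ω * 0 : K) = 0 from by ring,
    show (ω ^ 2 * 1 : K) = (ω + 1) from by linear_combination ((1)) * hω2] at hs03
  have hs20 := Vv_scale (K := K) n ω 1 0 hω0 (hω3)
  rw [show (ω * 1 : K) = ω from by ring,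
    show (ω ^ 2 * 0 : K) = 0 from by ring] at hs20
  have hs21 := Vv_scale (K := K) n ω 1 ω hω0 (hω3)
  rw [show (ω * 1 : K) = ω from by ring,
    show (ω ^ 2 * ω : K) = 1 from by linear_combination ((1) + ω) * hω2 + (ω) * h2K] at hs21
  have hs22 := Vv_scale (K := K) n ω 1 (ω + 1) hω0 (hω3)
  rw [show (ω * 1 : K) = ω from by ring,
    show (ω ^ 2 * (ω + 1) : K) = ω from by linear_combination ((2) + ω) * hω2 + ((1) + ω) * h2K] at hs22
  have hs23 := Vv_scale (K := K) n ω 1 1 hω0 (hω3)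
  rw [show (ω * 1 : K) = ω from by ring,
    show (ω ^ 2 * 1 : K) = (ω + 1) from by linear_combination ((1)) * hω2] at hs23
  have hs30 := Vv_scale (K := K) n (ω + 1) 1 0 hw10 (hω13)
  rw [show ((ω + 1) * 1 : K) = (ω + 1) from by ring,
    show ((ω + 1) ^ 2 * 0 : K) = 0 from by ring] at hs30
  have hs31 := Vv_scale (K := K) n (ω + 1) 1 (ω + 1) hw10 (hω13)
  rw [show ((ω + 1) * 1 : K) = (ω + 1) from by ring,
    show ((ω + 1) ^ 2 * (ω + 1) : K) = 1 from by linear_combination ((4) + ω) * hω2 + ((2) + (4) * ω) * h2K] at hs31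
  have hs32 := Vv_scale (K := K) n (ω + 1) 1 1 hw10 (hω13)
  rw [show ((ω + 1) * 1 : K) = (ω + 1) from by ring,
    show ((ω + 1) ^ 2 * 1 : K) = ω from by linear_combination ((1)) * hω2 + ((1) + ω) * h2K] at hs32
  have hs33 := Vv_scale (K := K) n (ω + 1) 1 ω hw10 (hω13)
  rw [show ((ω + 1) * 1 : K) = (ω + 1) from by ring,
    show ((ω + 1) ^ 2 * ω : K) = (ω + 1) from by linear_combination ((3) + ω) * hω2 + ((1) + (2) * ω) * h2K] at hs33
  rw [hs02, hs03, hs20, hs21, hs22, hs23, hs30, hs31, hs32, hs33, ih00, ih01, ih10, ih11, ih1w, ih1z]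
  ring

lemma V_main (hcard : Fintype.card K = 4) (ω : K) (hω0 : ω ≠ 0) (hω1 : ω ≠ 1)
    (hω2 : ω ^ 2 = ω + 1) (h2K : (2:K) = 0) (hω3 : ω ^ 3 = 1) (hω13 : (ω + 1) ^ 3 = 1)
    (hw10 : ω + 1 ≠ 0) (htr0 : Algebra.trace (ZMod 2) K 0 = 0)
    (htr1 : Algebra.trace (ZMod 2) K 1 = 0) (htrw : Algebra.trace (ZMod 2) K ω = 1)
    (htrw1 : Algebra.trace (ZMod 2) K (ω + 1) = 1) :
    ∀ n : ℕ, Vv K n 0 0 = st n 0 ∧ Vv K n 0 1 = st n 1 ∧ Vv K n 1 0 = st n 2 ∧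
      Vv K n 1 1 = st n 3 ∧ Vv K n 1 ω = st n 4 ∧ Vv K n 1 (ω + 1) = st n 4 := by
  intro n
  induction n with
  | zero =>
    refine ⟨?_, ?_, ?_, ?_, ?_, ?_⟩ <;>
      rw [Vv_zero] <;> simp [st, hω0, hw10]
  | succ n ih =>
    obtain ⟨i1, i2, i3, i4, i5, i6⟩ := ih
    exact ⟨case00 hcard ω hω0 hω1 hω2 h2K hω3 hω13 hw10 htr0 htr1 htrw htrw1 n i1 i2 i3 i4 i5 i6,
      case01 hcard ω hω0 hω1 hω2 h2K hω3 hω13 hw10 htr0 htr1 htrw htrw1 n i1 i2 i3 i4 i5 i6,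
      case10 hcard ω hω0 hω1 hω2 h2K hω3 hω13 hw10 htr0 htr1 htrw htrw1 n i1 i2 i3 i4 i5 i6,
      case11 hcard ω hω0 hω1 hω2 h2K hω3 hω13 hw10 htr0 htr1 htrw htrw1 n i1 i2 i3 i4 i5 i6,
      case1w hcard ω hω0 hω1 hω2 h2K hω3 hω13 hw10 htr0 htr1 htrw htrw1 n i1 i2 i3 i4 i5 i6,
      case1z hcard ω hω0 hω1 hω2 h2K hω3 hω13 hw10 htr0 htr1 htrw htrw1 n i1 i2 i3 i4 i5 i6⟩

lemma S_eq_st (hcard : Fintype.card K = 4) (n : ℕ) :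
    (∑ x : Fin n → K, (-1:ℂ)^((Algebra.trace (ZMod 2) K (esymmVal n 3 x)).val))
      = st n 0 + 3 * st n 1 + 3 * st n 2 + 3 * st n 3 + 6 * st n 4 := by
  obtain ⟨ω, hω0, hω1, hω2⟩ := exists_omega hcard
  have h2K : (2:K) = 0 := char2' (K := K)
  have hω3 : ω ^ 3 = 1 := by linear_combination (ω + 1) * hω2 + ω * h2K
  have hω13 : (ω + 1) ^ 3 = 1 := by linear_combination (ω + 4) * hω2 + (4*ω + 2) * h2K
  have hw10 : ω + 1 ≠ 0 := fun h => hω1 (by linear_combination h - h2K)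
  obtain ⟨htr0, htr1, htrw, htrw1⟩ := trace_vals ω hω0 hω1 hω2 hcard
  obtain ⟨i1, i2, i3, i4, i5, i6⟩ := V_main hcard ω hω0 hω1 hω2 h2K hω3 hω13 hw10
    htr0 htr1 htrw htrw1 n
  rw [← Vv_total]
  exact Vv_sum_all hcard ω hω0 hω1 hω2 h2K hω3 hω13 hw10 htr0 htr1 htrw htrw1 n i1 i2 i3 i4 i5 i6

lemma I_pow_cos (n : ℕ) :
    ((2*I)^n + (-2*I)^n : ℂ) = 2^n * (2 * (Real.cos (n * Real.pi / 2) : ℂ)) := by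
  have e1 : Complex.exp (((Real.pi:ℂ)/2) * I) = I := by
    rw [Complex.exp_mul_I, Complex.cos_pi_div_two, Complex.sin_pi_div_two]
    ring
  have e2 : Complex.exp (-((Real.pi:ℂ)/2) * I) = -I := by
    rw [Complex.exp_mul_I, Complex.cos_neg, Complex.sin_neg,
      Complex.cos_pi_div_two, Complex.sin_pi_div_two]
    ring
  have h1 : (I:ℂ)^n = Complex.exp ((n:ℂ) * (((Real.pi:ℂ)/2) * I)) := by
    rw [Complex.exp_nat_mul, e1]
  have h2 : (-I:ℂ)^n = Complex.exp ((n:ℂ) * (-((Real.pi:ℂ)/2) * I)) := by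
    rw [Complex.exp_nat_mul, e2]
  have hc : Complex.exp ((n:ℂ) * (((Real.pi:ℂ)/2) * I))
      + Complex.exp ((n:ℂ) * (-((Real.pi:ℂ)/2) * I))
      = 2 * Complex.cos ((n * Real.pi / 2 : ℝ) : ℂ) := by
    rw [Complex.cos]
    push_cast
    ring_nf
  have hmain : (I:ℂ)^n + (-I:ℂ)^n = 2 * (Real.cos (n * Real.pi / 2) : ℂ) := by
    rw [h1, h2, hc, Complex.ofReal_cos]
  calc ((2*I)^n + (-2*I)^n : ℂ) = 2^n * ((I:ℂ)^n + (-I:ℂ)^n) := by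
        rw [mul_pow, neg_mul, neg_pow (2*I), mul_pow]
        ring
    _ = 2^n * (2 * (Real.cos (n * Real.pi / 2) : ℂ)) := by rw [hmain]

end Stmt19Aux

/-- For the exponential sums `S(n) = S_{F_4}(e_{n,3})` over the field with four elements:
for all `n ≥ 1`,
`S(n) = 4^{n-1} + 3·2^{n-1} - (3/4)(2i)^n - (3/4)(-2i)^n
      = 4^{n-1} + 3·2^{n-1} - 3·2^{n-1} cos(nπ/2)`,
and the sequence satisfies the minimal linear recurrence with integer coefficients whose
characteristic polynomial is `μ(X) = (X-4)(X-2)(X²+4)`. -/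
theorem stmt19 (K : Type*) [Field K] [Fintype K] [Algebra (ZMod 2) K]
    (hcard : Fintype.card K = 4)
    (S : ℕ → ℂ)
    (hS : ∀ n, S n = ∑ x : Fin n → K,
      (-1 : ℂ) ^ ((Algebra.trace (ZMod 2) K (esymmVal n 3 x)).val))
    (μ : Polynomial ℂ)
    (hμ : μ = (X - C 4) * (X - C 2) * (X ^ 2 + C 4)) :
    (∀ n : ℕ, 1 ≤ n →
        S n = 4 ^ (n - 1) + 3 * 2 ^ (n - 1)
          - (3 / 4) * (2 * Complex.I) ^ n - (3 / 4) * (-2 * Complex.I) ^ n) ∧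
      (∀ n : ℕ, 1 ≤ n →
        S n = 4 ^ (n - 1) + 3 * 2 ^ (n - 1)
          - 3 * 2 ^ (n - 1) * (Real.cos (n * Real.pi / 2) : ℂ)) ∧
      (∀ n : ℕ, 1 ≤ n →
        S (n + 4) = ∑ m ∈ Finset.range 4, (-(μ.coeff m)) * S (n + m)) ∧
      ∀ (d : ℕ) (c : Fin d → ℤ),
        (∀ n : ℕ, 1 ≤ n → S (n + d) = ∑ i, (c i : ℂ) * S (n + i)) → 4 ≤ d := by
  have hSst : ∀ n, S n = Stmt19Aux.st n 0 + 3 * Stmt19Aux.st n 1 + 3 * Stmt19Aux.st n 2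
      + 3 * Stmt19Aux.st n 3 + 6 * Stmt19Aux.st n 4 := by
    intro n
    rw [hS n]
    exact Stmt19Aux.S_eq_st hcard n
  have h1 : ∀ n : ℕ, 1 ≤ n → S n = 4 ^ (n - 1) + 3 * 2 ^ (n - 1)
      - (3 / 4) * (2 * Complex.I) ^ n - (3 / 4) * (-2 * Complex.I) ^ n := by
    intro n hn
    obtain ⟨m, rfl⟩ : ∃ m, n = m + 1 := ⟨n - 1, by omega⟩
    obtain ⟨e0, e1, e2, e3, e4⟩ := Stmt19Aux.st_closed (m + 1)
    rw [hSst, e0, e1, e2, e3, e4, Nat.add_sub_cancel, zero_pow (Nat.succ_ne_zero m)]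
    ring
  have h1' : ∀ m : ℕ, S (m + 1) = 4 ^ m + 3 * 2 ^ m
      - (3 / 4) * (2 * Complex.I) ^ (m + 1) - (3 / 4) * (-2 * Complex.I) ^ (m + 1) := by
    intro m
    have h := h1 (m + 1) (by omega)
    rwa [Nat.add_sub_cancel] at h
  have h2 : ∀ n : ℕ, 1 ≤ n → S n = 4 ^ (n - 1) + 3 * 2 ^ (n - 1)
      - 3 * 2 ^ (n - 1) * (Real.cos (n * Real.pi / 2) : ℂ) := by
    intro n hn
    rw [h1 n hn]
    have hc := Stmt19Aux.I_pow_cos n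
    obtain ⟨m, rfl⟩ : ∃ m, n = m + 1 := ⟨n - 1, by omega⟩
    rw [Nat.add_sub_cancel]
    linear_combination (-3/4 : ℂ) * hc
  -- numeric values
  have hS1 : S 1 = 4 := by rw [show (1:ℕ) = 0 + 1 from rfl, h1' 0]; ring
  have hS2 : S 2 = 16 := by
    rw [show (2:ℕ) = 1 + 1 from rfl, h1' 1]
    linear_combination (-6 : ℂ) * Complex.I_sq
  have hS3 : S 3 = 28 := by rw [show (3:ℕ) = 2 + 1 from rfl, h1' 2]; ring
  have hS4 : S 4 = 64 := by
    rw [show (4:ℕ) = 3 + 1 from rfl, h1' 3]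
    linear_combination (-24 * Complex.I ^ 2 + 24 : ℂ) * Complex.I_sq
  have hS5 : S 5 = 304 := by rw [show (5:ℕ) = 4 + 1 from rfl, h1' 4]; ring
  have hS6 : S 6 = 1216 := by
    rw [show (6:ℕ) = 5 + 1 from rfl, h1' 5]
    linear_combination (-96 * Complex.I ^ 4 + 96 * Complex.I ^ 2 - 96 : ℂ) * Complex.I_sq
  have hS7 : S 7 = 4288 := by rw [show (7:ℕ) = 6 + 1 from rfl, h1' 6]; ring
  refine ⟨h1, h2, ?_, ?_⟩
  · -- recurrence
    intro n hn
    obtain ⟨m, rfl⟩ : ∃ m, n = m + 1 := ⟨n - 1, by omega⟩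
    have hμ' : μ = 32 - 24 * X + 12 * X ^ 2 - 6 * X ^ 3 + X ^ 4 := by
      rw [hμ]; simp only [map_ofNat]; ring
    have hc0 : μ.coeff 0 = 32 := by rw [hμ']; simp [coeff_X]
    have hc1 : μ.coeff 1 = -24 := by rw [hμ']; simp [coeff_X]
    have hc2 : μ.coeff 2 = 12 := by rw [hμ']; simp [coeff_X]
    have hc3 : μ.coeff 3 = -6 := by rw [hμ']; simp [coeff_X]
    rw [Finset.sum_range_succ, Finset.sum_range_succ, Finset.sum_range_succ,
      Finset.sum_range_one, hc0, hc1, hc2, hc3]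
    rw [show m + 1 + 0 = m + 1 from by omega, show m + 1 + 2 = m + 2 + 1 from by omega,
      show m + 1 + 3 = m + 3 + 1 from by omega, show m + 1 + 4 = m + 4 + 1 from by omega]
    rw [h1' m, h1' (m + 1), h1' (m + 2), h1' (m + 3), h1' (m + 4)]
    linear_combination ((-(3:ℂ)/4) * (16 * Complex.I ^ 2 - 48 * Complex.I + 32)
        * (2 * Complex.I) ^ (m + 1)
      + (-(3:ℂ)/4) * (16 * Complex.I ^ 2 + 48 * Complex.I + 32)
        * (-2 * Complex.I) ^ (m + 1)) * Complex.I_sq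
  · -- minimality
    intro d c hrec
    by_contra hd
    push_neg at hd
    interval_cases d
    · have h := hrec 1 (by norm_num)
      simp at h
      rw [hS1] at h
      norm_num at h
    · have ha := hrec 1 (by norm_num)
      have hb := hrec 2 (by norm_num)
      simp [Fin.sum_univ_one] at ha hb
      rw [hS1, hS2] at ha
      rw [hS2, hS3] at hb
      have : (36 : ℂ) = 0 := by linear_combination 4 * ha - hb
      norm_num at this
    · have ha := hrec 1 (by norm_num)
      have hb := hrec 2 (by norm_num)
      have hc := hrec 3 (by norm_num)
      simp [Fin.sum_univ_two] at ha hb hc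
      rw [hS1, hS2, hS3] at ha
      rw [hS2, hS3, hS4] at hb
      rw [hS3, hS4, hS5] at hc
      have : (172 : ℂ) = 0 := by linear_combination (-5/3 : ℂ) * ha + (-4/3 : ℂ) * hb + hc
      norm_num at this
    · have ha := hrec 1 (by norm_num)
      have hb := hrec 2 (by norm_num)
      have hc := hrec 3 (by norm_num)
      have hd4 := hrec 4 (by norm_num)
      simp [Fin.sum_univ_three] at ha hb hc hd4
      rw [hS1, hS2, hS3, hS4] at ha
      rw [hS2, hS3, hS4, hS5] at hb
      rw [hS3, hS4, hS5, hS6] at hc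
      rw [hS4, hS5, hS6, hS7] at hd4
      have : (19200 : ℂ) = 0 := by
        linear_combination (-624 : ℂ) * ha + (292 : ℂ) * hb + (-176 : ℂ) * hc + (43 : ℂ) * hd4
      norm_num at this
end
end
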